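/- arXiv:1504.05932 — 4 statements merged into one kernel-verified Lean document; each statement's English description precedes it below -/
import Mathlib

section
/- For any even p, the worst-case egalitarian rank of a balanced CSAM with all-pessimistic agents is n^p − (n−1)p/2, and no CSAM with all-pessimistic agents achieves a smaller worst-case egalitarian rank. -/
open scoped Classical

/-- A bundle in a basic categorized domain: one item (from `Fin n`) per category (`Fin p`). -/
abbrev Bundle (n p : ℕ) := Fin p → Fin n

/-- A preference: a binary relation on bundles (`R a b` means `a` is strictly preferred to `b`). -/
abbrev Pref (n p : ℕ) := Bundle n p → Bundle n p → Prop

/-- A profile assigns a preference to each of the `n` agents. -/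
abbrev Profile (n p : ℕ) := Fin n → Pref n p

/-- A categorial sequential allocation mechanism: a linear order over agent–category
pairs, i.e. a bijection from rounds `Fin (n*p)` to pairs. -/
abbrev Csam (n p : ℕ) := Fin (n * p) ≃ Fin n × Fin p

/-- All preferences in the profile are strict linear orders. -/
def ValidProfile {n p : ℕ} (P : Profile n p) : Prop :=
  ∀ j, IsStrictTotalOrder (Bundle n p) (P j)

/-- A valid allocation: in every category, no item is given to two agents. -/
def ValidAlloc {n p : ℕ} (A : Fin n → Bundle n p) : Prop :=
  ∀ i : Fin p, Function.Injective fun j => A j i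

/-- The rank of bundle `b` in preference `R` (1 = best, `n^p` = worst). -/
noncomputable def rank {n p : ℕ} (R : Pref n p) (b : Bundle n p) : ℕ :=
  1 + (Finset.univ.filter fun c => R c b).card

/-- `kval O j i`: the number of category-`i` items still available when agent `j`
picks from category `i` (depends only on `O`). -/
def kval {n p : ℕ} (O : Csam n p) (j : Fin n) (i : Fin p) : ℕ :=
  1 + (Finset.univ.filter fun j' : Fin n => O.symm (j, i) < O.symm (j', i)).card

/-- `Oj O j l`: the `l`-th category (0-based) that agent `j` visits in `O`. -/
noncomputable def Oj {n p : ℕ} (O : Csam n p) (j : Fin n) (l : Fin p) : Fin p :=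
  (O ((Finset.univ.image fun i : Fin p => O.symm (j, i)).orderIsoOfFin
      (by
        rw [Finset.card_image_of_injective _
          (fun a b h => congrArg Prod.snd (O.symm.injective h))]
        simp) l).1).2

/-- `NoInterruptF O j K`: for every later position `l > K` of agent `j`, no other agent
picks from category `Oj O j l` between agent `j`'s pick in category `Oj O j K`
and her pick in category `Oj O j l`. -/
def NoInterruptF {n p : ℕ} (O : Csam n p) (j : Fin n) (K : ℕ) : Prop :=
  ∀ lK : Fin p, (lK : ℕ) = K → ∀ l : Fin p, lK < l → ∀ j' : Fin n, j' ≠ j →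
    ¬ (O.symm (j, Oj O j lK) < O.symm (j', Oj O j l) ∧
       O.symm (j', Oj O j l) < O.symm (j, Oj O j l))

/-- `Kval O j`: the smallest (0-based) index `K` such that agent `j` is not interrupted
from position `K` onwards. -/
noncomputable def Kval {n p : ℕ} (O : Csam n p) (j : Fin n) : ℕ :=
  sInf {K : ℕ | K < p ∧ NoInterruptF O j K}

/-- Item `d` of category `i` is still available at round `t` under final allocation `A`. -/
def availAt {n p : ℕ} (O : Csam n p) (A : Fin n → Bundle n p) (t : Fin (n * p))
    (i : Fin p) (d : Fin n) : Prop :=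
  ∀ j' : Fin n, O.symm (j', i) < t → A j' i ≠ d

/-- Bundle `b` is still achievable by agent `j` at round `t`: it agrees with her previous
choices and all remaining components are still available. -/
def achievable {n p : ℕ} (O : Csam n p) (A : Fin n → Bundle n p) (j : Fin n)
    (t : Fin (n * p)) (b : Bundle n p) : Prop :=
  (∀ c : Fin p, O.symm (j, c) < t → b c = A j c) ∧
  (∀ c : Fin p, ¬ O.symm (j, c) < t → availAt O A t c (b c))

/-- Agent `j` plays optimistically in the run producing allocation `A`: at each of her
rounds she picks the item of her top-ranked still-achievable bundle. -/
def OptPlays {n p : ℕ} (O : Csam n p) (P : Profile n p) (A : Fin n → Bundle n p)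
    (j : Fin n) : Prop :=
  ∀ i : Fin p, ∃ b : Bundle n p, achievable O A j (O.symm (j, i)) b ∧
    (∀ b' : Bundle n p, achievable O A j (O.symm (j, i)) b' → b' ≠ b → P j b b') ∧
    A j i = b i

/-- Agent `j` plays pessimistically in the run producing `A`: at each of her rounds, for
every available alternative item `d'`, some achievable bundle with component `d'` is worse
than every achievable bundle with the component she actually chose. -/
def PesPlays {n p : ℕ} (O : Csam n p) (P : Profile n p) (A : Fin n → Bundle n p)
    (j : Fin n) : Prop :=
  ∀ i : Fin p, ∀ d' : Fin n, availAt O A (O.symm (j, i)) i d' → d' ≠ A j i →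
    ∃ w' : Bundle n p, achievable O A j (O.symm (j, i)) w' ∧ w' i = d' ∧
      ∀ w : Bundle n p, achievable O A j (O.symm (j, i)) w → w i = A j i → P j w w'

/-- `∏_{l = K_j}^{p} k_{j, O_j(l)}`. -/
noncomputable def optProd {n p : ℕ} (O : Csam n p) (j : Fin n) : ℕ :=
  ∏ l ∈ Finset.univ.filter (fun l : Fin p => Kval O j ≤ (l : ℕ)), kval O j (Oj O j l)

/-- `∑_{l = 1}^{p} (k_{j, O_j(l)} - 1)`. -/
noncomputable def pesSum {n p : ℕ} (O : Csam n p) (j : Fin n) : ℕ :=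
  ∑ l : Fin p, (kval O j (Oj O j l) - 1)

/-- `O` is a balanced CSAM: agents pick in `p` phases (one category per phase, phase order
`τ`), in agent order `σ` in even (0-based) phases and in reverse order in odd phases. -/
def IsBalanced {n p : ℕ} (O : Csam n p) : Prop :=
  ∃ σ : Fin n ≃ Fin n, ∃ τ : Fin p ≃ Fin p,
    ∀ j : Fin n, ∀ i : Fin p,
      ((O.symm (j, i) : ℕ)) =
        (τ.symm i : ℕ) * n +
          (if (τ.symm i : ℕ) % 2 = 0 then (σ j : ℕ) else n - 1 - (σ j : ℕ))

section CsamHelpers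

variable {n p : ℕ}

lemma Oj_bijective (O : Csam n p) (j : Fin n) : Function.Bijective (Oj O j) := by
  rw [Fintype.bijective_iff_injective_and_card]
  refine ⟨?_, rfl⟩
  intro l1 l2 h
  unfold Oj at h
  have key : ∀ x : Fin (n * p), x ∈ (Finset.univ.image fun i : Fin p => O.symm (j, i)) →
      O.symm (j, (O x).2) = x := by
    intro x hx
    obtain ⟨i, -, hi⟩ := Finset.mem_image.mp hx
    rw [← hi, Equiv.apply_symm_apply]
  have h2 := congrArg (fun i => O.symm (j, i)) h
  rw [key _ (Subtype.prop _), key _ (Subtype.prop _)] at h2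
  exact OrderIso.injective _ (Subtype.ext h2)

lemma pesSum_eq (O : Csam n p) (j : Fin n) :
    pesSum O j = ∑ i : Fin p, (kval O j i - 1) := by
  unfold pesSum
  exact (Oj_bijective O j).sum_comp (fun i => kval O j i - 1)

lemma kval_card (O : Csam n p) (j : Fin n) (i : Fin p) :
    (Finset.univ.filter fun j' : Fin n => O.symm (j, i) < O.symm (j', i)).card
      = kval O j i - 1 := by
  simp [kval]

lemma one_le_kval (O : Csam n p) (j : Fin n) (i : Fin p) : 1 ≤ kval O j i :=
  Nat.le_add_right 1 _

lemma filter_lt_card (O : Csam n p) (j : Fin n) (i : Fin p) :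
    (Finset.univ.filter fun j' : Fin n => O.symm (j', i) < O.symm (j, i)).card
      + kval O j i = n := by
  have hne : ∀ j' : Fin n, j' ≠ j → O.symm (j', i) ≠ O.symm (j, i) := by
    intro j' hj' h
    exact hj' (Prod.ext_iff.mp (O.symm.injective h)).1
  have key : insert j ((Finset.univ.filter fun j' => O.symm (j', i) < O.symm (j, i))
        ∪ (Finset.univ.filter fun j' => O.symm (j, i) < O.symm (j', i)))
      = (Finset.univ : Finset (Fin n)) := by
    apply Finset.eq_univ_iff_forall.mpr
    intro j'
    simp only [Finset.mem_insert, Finset.mem_union, Finset.mem_filter, Finset.mem_univ,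
      true_and]
    rcases eq_or_ne j' j with h | h
    · exact Or.inl h
    · rcases lt_or_gt_of_ne (hne j' h) with h2 | h2
      · exact Or.inr (Or.inl h2)
      · exact Or.inr (Or.inr h2)
  have hj : j ∉ ((Finset.univ.filter fun j' => O.symm (j', i) < O.symm (j, i))
        ∪ (Finset.univ.filter fun j' => O.symm (j, i) < O.symm (j', i))) := by
    simp
  have hdisj : Disjoint (Finset.univ.filter fun j' : Fin n => O.symm (j', i) < O.symm (j, i))
      (Finset.univ.filter fun j' : Fin n => O.symm (j, i) < O.symm (j', i)) := by
    rw [Finset.disjoint_filter]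
    intro x _ h1 h2
    exact absurd (h1.trans h2) (lt_irrefl _)
  have hcard := congrArg Finset.card key
  rw [Finset.card_insert_of_notMem hj, Finset.card_union_of_disjoint hdisj,
    kval_card] at hcard
  simp only [Finset.card_univ, Fintype.card_fin] at hcard
  have := one_le_kval O j i
  omega

end CsamHelpers

section Part1

variable {n p : ℕ}

lemma avail_card (O : Csam n p) (A : Fin n → Bundle n p) (hA : ValidAlloc A)
    (j : Fin n) (i : Fin p) :
    kval O j i - 1 ≤ (Finset.univ.filter fun d' : Fin n =>
      availAt O A (O.symm (j, i)) i d' ∧ d' ≠ A j i).card := by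
  have hsub : (Finset.univ.filter fun d' : Fin n =>
        ¬(availAt O A (O.symm (j, i)) i d' ∧ d' ≠ A j i))
      ⊆ insert (A j i) ((Finset.univ.filter fun j' : Fin n =>
          O.symm (j', i) < O.symm (j, i)).image fun j' => A j' i) := by
    intro d hd
    simp only [Finset.mem_filter, Finset.mem_univ, true_and] at hd
    simp only [Finset.mem_insert, Finset.mem_image, Finset.mem_filter, Finset.mem_univ,
      true_and]
    by_cases h : d = A j i
    · exact Or.inl h
    · right
      rw [not_and_or] at hd
      rcases hd with hd | hd
      · unfold availAt at hd
        push_neg at hd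
        obtain ⟨j', hj1, hj2⟩ := hd
        exact ⟨j', hj1, hj2⟩
      · exact absurd (not_not.mp hd) h
  have hc := Finset.card_le_card hsub
  have hins : (insert (A j i) ((Finset.univ.filter fun j' : Fin n =>
      O.symm (j', i) < O.symm (j, i)).image fun j' => A j' i)).card
      ≤ 1 + (n - kval O j i) := by
    refine (Finset.card_insert_le _ _).trans ?_
    have h1 := Finset.card_image_le (s := Finset.univ.filter fun j' : Fin n =>
      O.symm (j', i) < O.symm (j, i)) (f := fun j' => A j' i)
    have h2 := filter_lt_card O j i
    omega
  have hsplit := Finset.card_filter_add_card_filter_not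
    (s := (Finset.univ : Finset (Fin n)))
    (p := fun d' : Fin n => availAt O A (O.symm (j, i)) i d' ∧ d' ≠ A j i)
  simp only [Finset.card_univ, Fintype.card_fin] at hsplit
  have h2 := filter_lt_card O j i
  omega

lemma self_achievable (O : Csam n p) (A : Fin n → Bundle n p) (hA : ValidAlloc A)
    (j : Fin n) (t : Fin (n * p)) : achievable O A j t (A j) := by
  refine ⟨fun c _ => rfl, fun c hc j' hj' => ?_⟩
  intro h
  have hne : j' ≠ j := by rintro rfl; exact hc hj'
  exact hne (hA c h)

lemma part1_bound (O : Csam n p) (P : Profile n p) (hP : ValidProfile P)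
    (A : Fin n → Bundle n p) (hA : ValidAlloc A) (j : Fin n) (hj : PesPlays O P A j) :
    rank (P j) (A j) ≤ n ^ p - pesSum O j := by
  classical
  set T : Finset ((_ : Fin p) × Fin n) := Finset.univ.sigma (fun i : Fin p =>
    Finset.univ.filter fun d' : Fin n =>
      availAt O A (O.symm (j, i)) i d' ∧ d' ≠ A j i) with hT
  set F : ((_ : Fin p) × Fin n) → Bundle n p := fun x =>
    if hx : availAt O A (O.symm (j, x.1)) x.1 x.2 ∧ x.2 ≠ A j x.1 then
      Classical.choose (hj x.1 x.2 hx.1 hx.2) else A j with hF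
  have hspec : ∀ x : ((_ : Fin p) × Fin n),
      ∀ hx : availAt O A (O.symm (j, x.1)) x.1 x.2 ∧ x.2 ≠ A j x.1,
      achievable O A j (O.symm (j, x.1)) (F x) ∧ F x x.1 = x.2 ∧
        ∀ w : Bundle n p, achievable O A j (O.symm (j, x.1)) w → w x.1 = A j x.1 →
          P j w (F x) := by
    intro x hx
    have := Classical.choose_spec (hj x.1 x.2 hx.1 hx.2)
    rw [hF]; simp only [dif_pos hx]
    exact this
  have hmemT : ∀ x ∈ T, availAt O A (O.symm (j, x.1)) x.1 x.2 ∧ x.2 ≠ A j x.1 := by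
    intro x hx
    rw [hT, Finset.mem_sigma] at hx
    simpa using hx.2
  have hFmem : ∀ x ∈ T, F x ∈ Finset.univ.filter (fun c => P j (A j) c) := by
    intro x hx
    obtain ⟨hach, hxi, hworse⟩ := hspec x (hmemT x hx)
    simp only [Finset.mem_filter, Finset.mem_univ, true_and]
    exact hworse (A j) (self_achievable O A hA j _) rfl
  have hkey : ∀ x ∈ T, ∀ y ∈ T, F x = F y → O.symm (j, x.1) < O.symm (j, y.1) → False := by
    intro x hx y hy hFe hlt
    obtain ⟨hachx, hxi, -⟩ := hspec x (hmemT x hx)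
    obtain ⟨hachy, hyi, -⟩ := hspec y (hmemT y hy)
    have := hachy.1 x.1 hlt
    rw [← hFe, hxi] at this
    exact (hmemT x hx).2 this
  have hFinj : Set.InjOn F T := by
    intro x hx y hy hFe
    have h1 : x.1 = y.1 := by
      by_contra hne
      have hne2 : O.symm (j, x.1) ≠ O.symm (j, y.1) := by
        intro h
        exact hne (Prod.ext_iff.mp (O.symm.injective h)).2
      rcases lt_or_gt_of_ne hne2 with h | h
      · exact hkey x hx y hy hFe h
      · exact hkey y hy x hx hFe.symm h
    obtain ⟨-, hxi, -⟩ := hspec x (hmemT x hx)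
    obtain ⟨-, hyi, -⟩ := hspec y (hmemT y hy)
    have h2 : x.2 = y.2 := by rw [← hxi, ← hyi, hFe, h1]
    exact Sigma.ext h1 (heq_of_eq h2)
  have hcard1 : T.card ≤ (Finset.univ.filter (fun c => P j (A j) c)).card :=
    Finset.card_le_card_of_injOn F hFmem hFinj
  have hcard2 : pesSum O j ≤ T.card := by
    rw [hT, Finset.card_sigma, pesSum_eq]
    exact Finset.sum_le_sum fun i _ => avail_card O A hA j i
  -- partition of the bundle set
  have htri := hP j
  have hirr : ∀ b : Bundle n p, ¬ P j b b := fun b => htri.irrefl b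
  have hasym : ∀ b c : Bundle n p, P j b c → P j c b → False := fun b c h1 h2 =>
    hirr b (htri.trans _ _ _ h1 h2)
  set up := Finset.univ.filter (fun c : Bundle n p => P j c (A j)) with hup
  set down := Finset.univ.filter (fun c : Bundle n p => P j (A j) c) with hdown
  have hAj : A j ∉ down := by rw [hdown]; simp [hirr (A j)]
  have hdisj : Disjoint up (insert (A j) down) := by
    rw [Finset.disjoint_left]
    intro c hc hc2
    rw [hup, Finset.mem_filter] at hc
    rcases Finset.mem_insert.mp hc2 with h | h
    · rw [h] at hc; exact hirr (A j) hc.2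
    · rw [hdown, Finset.mem_filter] at h
      exact hasym _ _ hc.2 h.2
  have hcardu : up.card + (insert (A j) down).card ≤ n ^ p := by
    rw [← Finset.card_union_of_disjoint hdisj]
    refine (Finset.card_le_card (Finset.subset_univ _)).trans ?_
    simp [Finset.card_univ]
  rw [Finset.card_insert_of_notMem hAj] at hcardu
  have : pesSum O j ≤ down.card := le_trans hcard2 hcard1
  have hrk : rank (P j) (A j) = 1 + up.card := by rw [rank, hup]
  rw [hrk]
  omega

end Part1

section Balanced

variable {n p : ℕ}

lemma card_filter_val_lt (n : ℕ) (σ : Fin n ≃ Fin n) (j : Fin n) :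
    (Finset.univ.filter fun j' : Fin n => (σ j : ℕ) < (σ j' : ℕ)).card = n - 1 - (σ j : ℕ) := by
  have h : (Finset.univ.filter fun j' : Fin n => (σ j : ℕ) < (σ j' : ℕ)).card
      = (Finset.Ioi (σ j)).card := by
    apply Finset.card_equiv σ
    intro j'
    simp only [Finset.mem_filter, Finset.mem_univ, true_and, Finset.mem_Ioi, Fin.lt_def]
  rw [h, Fin.card_Ioi]

lemma card_filter_val_gt (n : ℕ) (σ : Fin n ≃ Fin n) (j : Fin n) :
    (Finset.univ.filter fun j' : Fin n => (σ j' : ℕ) < (σ j : ℕ)).card = (σ j : ℕ) := by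
  have h : (Finset.univ.filter fun j' : Fin n => (σ j' : ℕ) < (σ j : ℕ)).card
      = (Finset.Iio (σ j)).card := by
    apply Finset.card_equiv σ
    intro j'
    simp only [Finset.mem_filter, Finset.mem_univ, true_and, Finset.mem_Iio, Fin.lt_def]
  rw [h, Fin.card_Iio]

lemma card_evens (p : ℕ) :
    (Finset.univ.filter fun m : Fin p => (m : ℕ) % 2 = 0).card = (p + 1) / 2 := by
  have key : ∀ q : ℕ, (∑ x ∈ Finset.range q, if x % 2 = 0 then 1 else 0) = (q + 1) / 2 := by
    intro q
    induction q with
    | zero => simp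
    | succ r ih =>
      rw [Finset.sum_range_succ, ih]
      by_cases h : r % 2 = 0 <;> simp only [h, if_true, if_false] <;> omega
  rw [Finset.card_filter, Fin.sum_univ_eq_sum_range (fun x => if x % 2 = 0 then 1 else 0) p,
    key p]

lemma balanced_pesSum (hn : 0 < n) (hpe : Even p) (O : Csam n p) (hO : IsBalanced O)
    (j : Fin n) : pesSum O j = (n - 1) * p / 2 := by
  obtain ⟨σ, τ, hform⟩ := hO
  have hkv : ∀ i : Fin p, kval O j i - 1
      = if (τ.symm i : ℕ) % 2 = 0 then n - 1 - (σ j : ℕ) else (σ j : ℕ) := by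
    intro i
    rw [← kval_card]
    have hlt : ∀ j' : Fin n, (O.symm (j, i) < O.symm (j', i)) ↔
        (if (τ.symm i : ℕ) % 2 = 0 then (σ j : ℕ) < (σ j' : ℕ) else (σ j' : ℕ) < (σ j : ℕ)) := by
      intro j'
      rw [Fin.lt_def, hform j i, hform j' i]
      have h1 : (σ j : ℕ) < n := (σ j).2
      have h2 : (σ j' : ℕ) < n := (σ j').2
      by_cases h : (τ.symm i : ℕ) % 2 = 0 <;> simp only [h, if_true, if_false] <;> omega
    by_cases h : (τ.symm i : ℕ) % 2 = 0
    · rw [if_pos h, ← card_filter_val_lt n σ j]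
      congr 1
      ext j'
      simp [hlt j', h]
    · rw [if_neg h, ← card_filter_val_gt n σ j]
      congr 1
      ext j'
      simp [hlt j', h]
  rw [pesSum_eq]
  have hre : ∑ i : Fin p, (kval O j i - 1)
      = ∑ i : Fin p, (fun m : Fin p =>
          if (m : ℕ) % 2 = 0 then n - 1 - (σ j : ℕ) else (σ j : ℕ)) (τ.symm i) :=
    Finset.sum_congr rfl fun i _ => hkv i
  have hcomp := Equiv.sum_comp τ.symm
    (fun m : Fin p => if (m : ℕ) % 2 = 0 then n - 1 - (σ j : ℕ) else (σ j : ℕ))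
  rw [hre, hcomp]
  rw [Finset.sum_ite, Finset.sum_const, Finset.sum_const, smul_eq_mul, smul_eq_mul]
  obtain ⟨k, hk⟩ := hpe
  have hdvd : 2 ∣ p := ⟨k, by omega⟩
  have hce : (Finset.univ.filter fun m : Fin p => (m : ℕ) % 2 = 0).card = p / 2 := by
    rw [card_evens]; omega
  have hco : (Finset.univ.filter fun m : Fin p => ¬ (m : ℕ) % 2 = 0).card = p / 2 := by
    have := Finset.card_filter_add_card_filter_not
      (s := (Finset.univ : Finset (Fin p))) (p := fun m : Fin p => (m : ℕ) % 2 = 0)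
    simp only [Finset.card_univ, Fintype.card_fin] at this
    rw [card_evens] at this
    omega
  rw [hce, hco]
  have hσ : (σ j : ℕ) < n := (σ j).2
  have hsum : p / 2 * (n - 1 - (σ j : ℕ)) + p / 2 * (σ j : ℕ) = p / 2 * (n - 1) := by
    rw [← Nat.mul_add]
    congr 1
    omega
  rw [hsum, Nat.mul_comm, Nat.mul_div_assoc (n - 1) hdvd]

end Balanced

section Construction

variable {n p : ℕ}

/-- The fixed allocation: agent `j` gets item `j` in every category. -/
def A0 (n p : ℕ) : Fin n → Bundle n p := fun j _ => j

/-- `b` differs from `const j` at exactly one category, by an item picked later. -/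
def Wprop (O : Csam n p) (j : Fin n) (b : Bundle n p) : Prop :=
  ∃ i : Fin p, (∀ c, c ≠ i → b c = j) ∧ b i ≠ j ∧ O.symm (j, i) < O.symm (b i, i)

lemma Wprop_unique (O : Csam n p) (j : Fin n) (b : Bundle n p) {i1 i2 : Fin p}
    (h1 : (∀ c, c ≠ i1 → b c = j) ∧ b i1 ≠ j ∧ O.symm (j, i1) < O.symm (b i1, i1))
    (h2 : (∀ c, c ≠ i2 → b c = j) ∧ b i2 ≠ j ∧ O.symm (j, i2) < O.symm (b i2, i2)) :
    i1 = i2 := by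
  by_contra hne
  exact h1.2.1 (h2.1 i1 hne)

noncomputable def vfun (O : Csam n p) (j : Fin n) (b : Bundle n p) : ℕ :=
  if hb : Wprop O j b then
    n ^ p + (n * p - ((O.symm (j, Classical.choose hb)) : ℕ)) * n
      + (b (Classical.choose hb) : ℕ)
  else if b = fun _ => j then n ^ p else (finFunctionFinEquiv b : ℕ)

lemma vfun_eq (O : Csam n p) (j : Fin n) (b : Bundle n p) (i : Fin p)
    (h : (∀ c, c ≠ i → b c = j) ∧ b i ≠ j ∧ O.symm (j, i) < O.symm (b i, i)) :
    vfun O j b = n ^ p + (n * p - ((O.symm (j, i)) : ℕ)) * n + (b i : ℕ) := by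
  have hb : Wprop O j b := ⟨i, h⟩
  rw [vfun, dif_pos hb]
  have hs := Classical.choose_spec hb
  have hi : Classical.choose hb = i := Wprop_unique O j b hs h
  rw [hi]

lemma vfun_const (O : Csam n p) (j : Fin n) : vfun O j (fun _ => j) = n ^ p := by
  rw [vfun, dif_neg, if_pos rfl]
  rintro ⟨i, -, hne, -⟩
  exact hne rfl

lemma vfun_other (O : Csam n p) (j : Fin n) (b : Bundle n p) (h1 : ¬ Wprop O j b)
    (h2 : b ≠ fun _ => j) : vfun O j b = (finFunctionFinEquiv b : ℕ) := by
  rw [vfun, dif_neg h1, if_neg h2]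

lemma vfun_ge (hn : 0 < n) (O : Csam n p) (j : Fin n) (b : Bundle n p)
    (hb : Wprop O j b) : n ^ p + n ≤ vfun O j b := by
  obtain ⟨i, hbi⟩ := hb
  rw [vfun_eq O j b i hbi]
  have hr : ((O.symm (j, i)) : ℕ) < n * p := (O.symm (j, i)).2
  have h2 : n ≤ (n * p - ((O.symm (j, i)) : ℕ)) * n :=
    Nat.le_mul_of_pos_left n (by omega)
  omega

lemma vfun_le_not (O : Csam n p) (j : Fin n) (b : Bundle n p) (hb : ¬ Wprop O j b) :
    vfun O j b ≤ n ^ p := by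
  by_cases hc : b = fun _ => j
  · rw [hc, vfun_const]
  · rw [vfun_other O j b hb hc]
    exact le_of_lt (finFunctionFinEquiv b).2

lemma vfun_inj (hn : 0 < n) (O : Csam n p) (j : Fin n) :
    Function.Injective (vfun O j) := by
  intro b c h
  by_cases hb : Wprop O j b <;> by_cases hc : Wprop O j c
  · obtain ⟨i, hbi⟩ := hb
    obtain ⟨i', hci⟩ := hc
    rw [vfun_eq O j b i hbi, vfun_eq O j c i' hci] at h
    set r := ((O.symm (j, i)) : ℕ) with hrdef
    set r' := ((O.symm (j, i')) : ℕ) with hrdef'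
    have hr : r < n * p := (O.symm (j, i)).2
    have hr' : r' < n * p := (O.symm (j, i')).2
    have e1 : (n * p - r) * n + (b i : ℕ) = (n * p - r') * n + (c i' : ℕ) := by omega
    have d1 : ((n * p - r) * n + (b i : ℕ)) / n = n * p - r := by
      rw [Nat.mul_comm, Nat.mul_add_div hn, Nat.div_eq_of_lt (b i).2, Nat.add_zero]
    have d2 : ((n * p - r') * n + (c i' : ℕ)) / n = n * p - r' := by
      rw [Nat.mul_comm, Nat.mul_add_div hn, Nat.div_eq_of_lt (c i').2, Nat.add_zero]
    rw [e1, d2] at d1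
    have hrr : r = r' := by omega
    rw [hrr] at e1
    have hbi2 : (b i : ℕ) = (c i' : ℕ) := by omega
    have hii : i = i' := by
      have : O.symm (j, i) = O.symm (j, i') := Fin.ext hrr
      exact (Prod.ext_iff.mp (O.symm.injective this)).2
    subst hii
    funext x
    by_cases hx : x = i
    · subst hx; exact Fin.ext hbi2
    · rw [hbi.1 x hx, hci.1 x hx]
  · have h1 := vfun_ge hn O j b hb
    have h2 := vfun_le_not O j c hc
    omega
  · have h1 := vfun_ge hn O j c hc
    have h2 := vfun_le_not O j b hb
    omega
  · by_cases hcb : b = fun _ => j <;> by_cases hcc : c = fun _ => j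
    · rw [hcb, hcc]
    · rw [hcb, vfun_const, vfun_other O j c hc hcc] at h
      have := (finFunctionFinEquiv c).2
      omega
    · rw [hcc, vfun_const, vfun_other O j b hb hcb] at h
      have := (finFunctionFinEquiv b).2
      omega
    · rw [vfun_other O j b hb hcb, vfun_other O j c hc hcc] at h
      exact finFunctionFinEquiv.injective (Fin.ext h)

noncomputable def P0 (O : Csam n p) : Profile n p :=
  fun j b c => vfun O j b < vfun O j c

lemma valid_P0 (hn : 0 < n) (O : Csam n p) : ValidProfile (P0 O) := by
  intro j
  refine { trichotomous := ?_, irrefl := ?_, trans := ?_ }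
  · intro a b h1 h2
    exact vfun_inj hn O j (le_antisymm (not_lt.mp h2) (not_lt.mp h1))
  · intro a
    exact lt_irrefl _
  · intro a b c
    exact Nat.lt_trans

end Construction

section Construction2

variable {n p : ℕ}

lemma valid_A0 : ValidAlloc (A0 n p) := fun _ _ _ h => h

lemma pes_all (hn : 0 < n) (O : Csam n p) (j : Fin n) :
    PesPlays O (P0 O) (A0 n p) j := by
  intro i d' hav hne
  have hne' : d' ≠ j := hne
  have hlt : O.symm (j, i) < O.symm (d', i) := by
    have hne2 : O.symm (d', i) ≠ O.symm (j, i) := fun h =>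
      hne' (Prod.ext_iff.mp (O.symm.injective h)).1
    rcases lt_or_gt_of_ne hne2 with h | h
    · exact absurd rfl (hav d' h)
    · exact h
  refine ⟨fun c => if c = i then d' else j, ⟨?_, ?_⟩, if_pos rfl, ?_⟩
  · intro c hc
    have hci : c ≠ i := by rintro rfl; exact lt_irrefl _ hc
    show (if c = i then d' else j) = A0 n p j c
    rw [if_neg hci]; rfl
  · intro c hc j'' h2
    by_cases hci : c = i
    · subst hci; simpa using hav j'' h2
    · show A0 n p j'' c ≠ (if c = i then d' else j)
      rw [if_neg hci]
      intro hEq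
      have hjj : j'' = j := hEq
      rw [hjj] at h2
      exact hc h2
  · intro w hw hwi
    have hwi' : w i = j := hwi
    have hw'spec : (∀ c, c ≠ i → (fun c => if c = i then d' else j) c = j) ∧
        (fun c => if c = i then d' else j) i ≠ j ∧
        O.symm (j, i) < O.symm ((fun c => if c = i then d' else j) i, i) := by
      refine ⟨fun c hc => if_neg hc, ?_, ?_⟩ <;> simp [hne', hlt]
    have hvw' : vfun O j (fun c => if c = i then d' else j)
        = n ^ p + (n * p - ((O.symm (j, i)) : ℕ)) * n + (d' : ℕ) := by
      rw [vfun_eq O j _ i hw'spec]; simp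
    show vfun O j w < vfun O j (fun c => if c = i then d' else j)
    rw [hvw']
    have hrlt' : ((O.symm (j, i)) : ℕ) < n * p := (O.symm (j, i)).2
    by_cases hbw : Wprop O j w
    · obtain ⟨i₂, h₂⟩ := hbw
      have hne12 : i₂ ≠ i := by rintro rfl; exact h₂.2.1 hwi'
      have hr2 : O.symm (j, i) < O.symm (j, i₂) := by
        have hne3 : O.symm (j, i₂) ≠ O.symm (j, i) := fun h =>
          hne12 (Prod.ext_iff.mp (O.symm.injective h)).2
        rcases lt_or_gt_of_ne hne3 with h | h
        · exact absurd (hw.1 i₂ h) h₂.2.1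
        · exact h
      rw [vfun_eq O j w i₂ h₂]
      have hrlt : ((O.symm (j, i)) : ℕ) < ((O.symm (j, i₂)) : ℕ) := hr2
      have hr2lt : ((O.symm (j, i₂)) : ℕ) < n * p := (O.symm (j, i₂)).2
      have hmul : (n * p - ((O.symm (j, i₂)) : ℕ)) * n + n
          ≤ (n * p - ((O.symm (j, i)) : ℕ)) * n := by
        have h1 : (n * p - ((O.symm (j, i₂)) : ℕ)) + 1 ≤ n * p - ((O.symm (j, i)) : ℕ) := by
          omega
        calc (n * p - ((O.symm (j, i₂)) : ℕ)) * n + n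
            = ((n * p - ((O.symm (j, i₂)) : ℕ)) + 1) * n := by ring
          _ ≤ (n * p - ((O.symm (j, i)) : ℕ)) * n := Nat.mul_le_mul_right n h1
      have hwlt : (w i₂ : ℕ) < n := (w i₂).2
      omega
    · by_cases hconst : w = fun _ => j
      · rw [hconst, vfun_const]
        have : 0 < (n * p - ((O.symm (j, i)) : ℕ)) * n := Nat.mul_pos (by omega) hn
        omega
      · rw [vfun_other O j w hbw hconst]
        have := (finFunctionFinEquiv w).2
        omega

lemma rank_P0 (hn : 0 < n) (O : Csam n p) (j : Fin n) :
    rank (P0 O j) (A0 n p j) + pesSum O j = n ^ p := by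
  have hvA : vfun O j (A0 n p j) = n ^ p := vfun_const O j
  have hfilter : (Finset.univ.filter fun c : Bundle n p => P0 O j c (A0 n p j))
      = Finset.univ.filter fun c : Bundle n p => vfun O j c < n ^ p := by
    ext c
    simp only [Finset.mem_filter, Finset.mem_univ, true_and, P0, hvA]
  have hcompl : (Finset.univ.filter fun c : Bundle n p => ¬ vfun O j c < n ^ p)
      = insert (A0 n p j) (Finset.univ.filter (Wprop O j)) := by
    ext c
    simp only [Finset.mem_filter, Finset.mem_univ, true_and, Finset.mem_insert, not_lt]
    constructor
    · intro h
      by_cases hb : Wprop O j c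
      · exact Or.inr hb
      · by_cases hconst : c = fun _ => j
        · exact Or.inl hconst
        · rw [vfun_other O j c hb hconst] at h
          exact absurd (finFunctionFinEquiv c).2 (not_lt.mpr h)
    · rintro (h | h)
      · rw [h, hvA]
      · have := vfun_ge hn O j c h
        omega
  have hA0notW : A0 n p j ∉ Finset.univ.filter (Wprop O j) := by
    simp only [Finset.mem_filter, Finset.mem_univ, true_and]
    rintro ⟨i, -, hne, -⟩
    exact hne rfl
  have hWcard : (Finset.univ.filter (Wprop O j)).card = pesSum O j := by
    rw [pesSum_eq]
    have hbij : (Finset.univ.sigma fun i : Fin p => Finset.univ.filter fun d' : Fin n =>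
        O.symm (j, i) < O.symm (d', i)).card = (Finset.univ.filter (Wprop O j)).card := by
      apply Finset.card_bij (fun x _ => fun c => if c = x.1 then x.2 else j)
      · intro x hx
        rw [Finset.mem_sigma] at hx
        have hx2 := hx.2
        simp only [Finset.mem_filter, Finset.mem_univ, true_and] at hx2
        simp only [Finset.mem_filter, Finset.mem_univ, true_and]
        have hne : x.2 ≠ j := by
          intro h; rw [h] at hx2; exact lt_irrefl _ hx2
        exact ⟨x.1, fun c hc => if_neg hc, by simpa using hne, by simpa using hx2⟩
      · intro x hx y hy h
        rw [Finset.mem_sigma] at hx hy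
        have hx2 := hx.2
        have hy2 := hy.2
        simp only [Finset.mem_filter, Finset.mem_univ, true_and] at hx2 hy2
        rcases eq_or_ne x.1 y.1 with h1 | h1
        · have h2 := congrFun h x.1
          rw [if_pos rfl, if_pos h1] at h2
          exact Sigma.ext h1 (heq_of_eq h2)
        · have h2 := congrFun h x.1
          rw [if_pos rfl, if_neg h1] at h2
          rw [h2] at hx2
          exact absurd hx2 (lt_irrefl _)
      · intro b hb
        simp only [Finset.mem_filter, Finset.mem_univ, true_and] at hb
        obtain ⟨i, hall, hne, hlt⟩ := hb
        refine ⟨⟨i, b i⟩, ?_, ?_⟩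
        · rw [Finset.mem_sigma]
          exact ⟨Finset.mem_univ _, by simpa using hlt⟩
        · funext c
          by_cases hc : c = i
          · subst hc; rw [if_pos rfl]
          · rw [if_neg hc, hall c hc]
    rw [← hbij, Finset.card_sigma]
    exact Finset.sum_congr rfl fun i _ => kval_card O j i
  have hsplit := Finset.card_filter_add_card_filter_not
    (s := (Finset.univ : Finset (Bundle n p)))
    (p := fun c : Bundle n p => vfun O j c < n ^ p)
  have huniv : (Finset.univ : Finset (Bundle n p)).card = n ^ p := by
    simp [Finset.card_univ]
  rw [hcompl, Finset.card_insert_of_notMem hA0notW, hWcard, huniv] at hsplit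
  have hrk : rank (P0 O j) (A0 n p j)
      = 1 + (Finset.univ.filter fun c : Bundle n p => vfun O j c < n ^ p).card := by
    rw [rank, hfilter]
  omega

end Construction2

section Average

variable {n p : ℕ}

lemma exists_small (hn : 0 < n) (hpe : Even p) (O : Csam n p) :
    ∃ j : Fin n, pesSum O j ≤ (n - 1) * p / 2 := by
  obtain ⟨k, hk⟩ := hpe
  have hdvd : 2 ∣ p := ⟨k, by omega⟩
  have key : ∀ i : Fin p, 2 * ∑ j : Fin n, (kval O j i - 1) = n * (n - 1) := by
    intro i
    have e1 : ∑ j : Fin n, (kval O j i - 1)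
        = ∑ j : Fin n, (Finset.univ.filter fun j' : Fin n =>
            O.symm (j, i) < O.symm (j', i)).card :=
      Finset.sum_congr rfl fun j _ => (kval_card O j i).symm
    have hsym : ∑ j : Fin n, (Finset.univ.filter fun j' : Fin n =>
          O.symm (j, i) < O.symm (j', i)).card
        = ∑ j : Fin n, (Finset.univ.filter fun j' : Fin n =>
            O.symm (j', i) < O.symm (j, i)).card := by
      simp_rw [Finset.card_filter]
      exact Finset.sum_comm
    have e3 : ∑ j : Fin n, ((Finset.univ.filter fun j' : Fin n =>
          O.symm (j, i) < O.symm (j', i)).card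
        + (Finset.univ.filter fun j' : Fin n => O.symm (j', i) < O.symm (j, i)).card)
        = ∑ _j : Fin n, (n - 1) := by
      refine Finset.sum_congr rfl fun j _ => ?_
      have h1 := filter_lt_card O j i
      have h2 := kval_card O j i
      have h3 := one_le_kval O j i
      omega
    rw [Finset.sum_add_distrib] at e3
    rw [Finset.sum_const, Finset.card_univ, Fintype.card_fin, smul_eq_mul] at e3
    omega
  have total : 2 * ∑ j : Fin n, pesSum O j = p * (n * (n - 1)) := by
    have e : ∑ j : Fin n, pesSum O j = ∑ i : Fin p, ∑ j : Fin n, (kval O j i - 1) := by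
      rw [Finset.sum_congr rfl fun j _ => pesSum_eq O j]
      exact Finset.sum_comm
    rw [e, Finset.mul_sum, Finset.sum_congr rfl fun i _ => key i, Finset.sum_const,
      Finset.card_univ, Fintype.card_fin, smul_eq_mul]
  have hc2 : 2 * ((n - 1) * p / 2) = (n - 1) * p := by
    have hp2 : p / 2 = k := by omega
    rw [Nat.mul_div_assoc (n - 1) hdvd, hp2, hk]
    ring
  have hsum_le : ∑ j : Fin n, pesSum O j ≤ ∑ _j : Fin n, ((n - 1) * p / 2) := by
    rw [Finset.sum_const, Finset.card_univ, Fintype.card_fin, smul_eq_mul]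
    have h1 : 2 * (n * ((n - 1) * p / 2)) = n * ((n - 1) * p) := by
      calc 2 * (n * ((n - 1) * p / 2)) = n * (2 * ((n - 1) * p / 2)) :=
            Nat.mul_left_comm 2 n _
        _ = n * ((n - 1) * p) := by rw [hc2]
    have h2 : p * (n * (n - 1)) = n * ((n - 1) * p) := by ring
    omega
  obtain ⟨j, -, hj⟩ := Finset.exists_le_of_sum_le ⟨⟨0, hn⟩, Finset.mem_univ _⟩ hsum_le
  exact ⟨j, hj⟩

end Average


theorem statement13 (n p : ℕ) (hn : 0 < n) (hp : 0 < p) (hpe : Even p)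
    (O : Csam n p) (hO : IsBalanced O) :
    (∀ P : Profile n p, ValidProfile P →
      ∀ A : Fin n → Bundle n p, ValidAlloc A → (∀ j, PesPlays O P A j) →
        ∀ j : Fin n, rank (P j) (A j) ≤ n ^ p - (n - 1) * p / 2) ∧
    (∃ P : Profile n p, ValidProfile P ∧
      ∃ A : Fin n → Bundle n p, ValidAlloc A ∧ (∀ j, PesPlays O P A j) ∧
        ∃ j : Fin n, rank (P j) (A j) = n ^ p - (n - 1) * p / 2) ∧
    (∀ O' : Csam n p, ∃ P : Profile n p, ValidProfile P ∧
      ∃ A : Fin n → Bundle n p, ValidAlloc A ∧ (∀ j, PesPlays O' P A j) ∧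
        ∃ j : Fin n, n ^ p - (n - 1) * p / 2 ≤ rank (P j) (A j)) := by
  have hc : ∀ j : Fin n, pesSum O j = (n - 1) * p / 2 := balanced_pesSum hn hpe O hO
  refine ⟨?_, ?_, ?_⟩
  · intro P hP A hA hpes j
    have h := part1_bound O P hP A hA j (hpes j)
    rw [hc j] at h
    exact h
  · refine ⟨P0 O, valid_P0 hn O, A0 n p, valid_A0, fun j => pes_all hn O j, ⟨0, hn⟩, ?_⟩
    have h1 := rank_P0 hn O ⟨0, hn⟩
    have h2 := hc ⟨0, hn⟩
    have h3 : 1 ≤ rank (P0 O ⟨0, hn⟩) (A0 n p ⟨0, hn⟩) := by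
      rw [rank]; omega
    omega
  · intro O'
    obtain ⟨js, hjs⟩ := exists_small hn hpe O'
    refine ⟨P0 O', valid_P0 hn O', A0 n p, valid_A0, fun j => pes_all hn O' j, js, ?_⟩
    have h1 := rank_P0 hn O' js
    omega
end

section
/- Suppose all agents are strategic with complete and perfect information, and a CSAM f_O is played as an extensive-form game with the unique subgame-perfect Nash equilibrium outcome. Then for every agent j and every profile, the rank of the bundle allocated to agent j in the SPNE is at most n^p + 1 − ∏_{i=1}^{p} k_{j,i}. -/
open scoped Classical

/-- In history `h`, item `d` of category `i` is available at round `t`: no earlier round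
assigned to category `i` chose `d`. -/
def availH {n p : ℕ} (O : Csam n p) (h : Fin (n * p) → Fin n) (t : ℕ) (i : Fin p)
    (d : Fin n) : Prop :=
  ∀ t' : Fin (n * p), (t' : ℕ) < t → (O t').2 = i → h t' ≠ d

/-- `F` is a backward-induction (SPNE) outcome function for the extensive-form game of
the CSAM `O` under profile `P`: `F t h` is the final allocation of the subgame starting at
round `t` with history `h` (choices at rounds `< t`); at a leaf it reads off the history,
and at each node the active agent picks an available item whose continuation she weakly
prefers to that of every other available item. -/
def BIOutcome {n p : ℕ} (O : Csam n p) (P : Profile n p)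
    (F : ℕ → (Fin (n * p) → Fin n) → Fin n → Bundle n p) : Prop :=
  (∀ h : Fin (n * p) → Fin n, ∀ j : Fin n, ∀ i : Fin p, F (n * p) h j i = h (O.symm (j, i))) ∧
  (∀ t : ℕ, ∀ ht : t < n * p, ∀ h : Fin (n * p) → Fin n,
    ∃ d : Fin n, availH O h t (O ⟨t, ht⟩).2 d ∧
      F t h = F (t + 1) (Function.update h ⟨t, ht⟩ d) ∧
      ∀ d' : Fin n, availH O h t (O ⟨t, ht⟩).2 d' → d' ≠ d →
        ((F (t + 1) (Function.update h ⟨t, ht⟩ d)) (O ⟨t, ht⟩).1 =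
            (F (t + 1) (Function.update h ⟨t, ht⟩ d')) (O ⟨t, ht⟩).1) ∨
          P (O ⟨t, ht⟩).1
            ((F (t + 1) (Function.update h ⟨t, ht⟩ d)) (O ⟨t, ht⟩).1)
            ((F (t + 1) (Function.update h ⟨t, ht⟩ d')) (O ⟨t, ht⟩).1))

section Auxiliary

open Finset

variable {n p : ℕ}

/-- How availability evolves after one move. -/
lemma availH_succ (O : Csam n p) (h : Fin (n * p) → Fin n) (t : ℕ) (ht : t < n * p)
    (d : Fin n) (i : Fin p) (e : Fin n) :
    availH O (Function.update h ⟨t, ht⟩ d) (t + 1) i e ↔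
      (availH O h t i e ∧ ((O ⟨t, ht⟩).2 = i → e ≠ d)) := by
  constructor
  · intro H
    refine ⟨fun t' ht' hc => ?_, fun hc => ?_⟩
    · have h1 := H t' (by omega) hc
      rwa [Function.update_of_ne (by
        intro hh; rw [hh] at ht'; simp at ht')] at h1
    · have h1 := H ⟨t, ht⟩ (by simp) hc
      rw [Function.update_self] at h1
      exact fun hh => h1 hh.symm
  · rintro ⟨H1, H2⟩ t' ht' hc
    rcases eq_or_ne t' ⟨t, ht⟩ with rfl | hne
    · rw [Function.update_self]; exact fun hh => H2 hc hh.symm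
    · rw [Function.update_of_ne hne]
      have : (t' : ℕ) ≠ t := fun hh => hne (Fin.ext hh)
      exact H1 t' (by omega) hc

/-- Number of currently available items minus the number of interfering future rounds
before agent `j`'s pick in category `i`. -/
noncomputable def gval (O : Csam n p) (j : Fin n) (i : Fin p) (t : ℕ)
    (h : Fin (n * p) → Fin n) : ℕ :=
  (Finset.univ.filter fun d : Fin n => availH O h t i d).card -
  (Finset.univ.filter fun t' : Fin (n * p) =>
      t ≤ (t' : ℕ) ∧ (t' : ℕ) < ((O.symm (j, i)) : ℕ) ∧ (O t').2 = i).card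

lemma gval_succ (O : Csam n p) (j : Fin n) (t : ℕ) (ht : t < n * p)
    (h : Fin (n * p) → Fin n) (i : Fin p) (hti : t + 1 ≤ ((O.symm (j, i)) : ℕ))
    (e : Fin n) (he : availH O h t (O ⟨t, ht⟩).2 e) :
    gval O j i (t + 1) (Function.update h ⟨t, ht⟩ e) = gval O j i t h := by
  set i0 := (O ⟨t, ht⟩).2 with hi0
  by_cases hii : i0 = i
  · subst hii
    -- available set loses one element (e), interval loses one round (t)
    have hA : (Finset.univ.filter fun d : Fin n =>
        availH O (Function.update h ⟨t, ht⟩ e) (t + 1) i0 d) =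
        (Finset.univ.filter fun d : Fin n => availH O h t i0 d).erase e := by
      ext d
      simp only [mem_filter, mem_univ, true_and, mem_erase, availH_succ]
      tauto
    have heA : e ∈ Finset.univ.filter fun d : Fin n => availH O h t i0 d := by
      simp only [mem_filter, mem_univ, true_and]; exact he
    have hI : (Finset.univ.filter fun t' : Fin (n * p) =>
        t + 1 ≤ (t' : ℕ) ∧ (t' : ℕ) < ((O.symm (j, i0)) : ℕ) ∧ (O t').2 = i0) =
        (Finset.univ.filter fun t' : Fin (n * p) =>
        t ≤ (t' : ℕ) ∧ (t' : ℕ) < ((O.symm (j, i0)) : ℕ) ∧ (O t').2 = i0).erase ⟨t, ht⟩ := by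
      ext t'
      simp only [mem_filter, mem_univ, true_and, mem_erase]
      constructor
      · rintro ⟨h1, h2, h3⟩
        exact ⟨fun hh => by rw [hh] at h1; simp at h1, by omega, h2, h3⟩
      · rintro ⟨h1, h2, h3, h4⟩
        have : (t' : ℕ) ≠ t := fun hh => h1 (Fin.ext hh)
        exact ⟨by omega, h3, h4⟩
    have htI : (⟨t, ht⟩ : Fin (n * p)) ∈ Finset.univ.filter fun t' : Fin (n * p) =>
        t ≤ (t' : ℕ) ∧ (t' : ℕ) < ((O.symm (j, i0)) : ℕ) ∧ (O t').2 = i0 := by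
      simp only [mem_filter, mem_univ, true_and]
      refine ⟨le_refl t, ?_, ?_⟩
      · show t < _
        omega
      · trivial
    unfold gval
    rw [hA, hI, Finset.card_erase_of_mem heA, Finset.card_erase_of_mem htI]
    have h1 : 0 < (Finset.univ.filter fun d : Fin n => availH O h t i0 d).card :=
      Finset.card_pos.2 ⟨e, heA⟩
    have h2 : 0 < (Finset.univ.filter fun t' : Fin (n * p) =>
        t ≤ (t' : ℕ) ∧ (t' : ℕ) < ((O.symm (j, i0)) : ℕ) ∧ (O t').2 = i0).card :=
      Finset.card_pos.2 ⟨⟨t, ht⟩, htI⟩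
    omega
  · -- category untouched at round t
    have hA : (Finset.univ.filter fun d : Fin n =>
        availH O (Function.update h ⟨t, ht⟩ e) (t + 1) i d) =
        (Finset.univ.filter fun d : Fin n => availH O h t i d) := by
      ext d
      simp only [mem_filter, mem_univ, true_and, availH_succ]
      have : (O ⟨t, ht⟩).2 ≠ i := hii
      tauto
    have hI : (Finset.univ.filter fun t' : Fin (n * p) =>
        t + 1 ≤ (t' : ℕ) ∧ (t' : ℕ) < ((O.symm (j, i)) : ℕ) ∧ (O t').2 = i) =
        (Finset.univ.filter fun t' : Fin (n * p) =>
        t ≤ (t' : ℕ) ∧ (t' : ℕ) < ((O.symm (j, i)) : ℕ) ∧ (O t').2 = i) := by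
      ext t'
      simp only [mem_filter, mem_univ, true_and]
      constructor
      · rintro ⟨h1, h2, h3⟩; exact ⟨by omega, h2, h3⟩
      · rintro ⟨h1, h2, h3⟩
        refine ⟨?_, h2, h3⟩
        rcases eq_or_lt_of_le h1 with hh | hh
        · exfalso
          have : t' = (⟨t, ht⟩ : Fin (n * p)) := Fin.ext hh.symm
          rw [this] at h3
          exact hii h3
        · omega
    unfold gval
    rw [hA, hI]

/-- The key invariant, by backward induction: at any node, the number of bundles that are
weakly worse (for `j`) than `j`'s SPNE outcome and consistent with `j`'s past picks is at
least the product of the `gval`s over `j`'s remaining categories. -/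
lemma key_invariant (O : Csam n p) (P : Profile n p) (hP : ValidProfile P)
    (F : ℕ → (Fin (n * p) → Fin n) → Fin n → Bundle n p) (hF : BIOutcome O P F) :
    ∀ m t, t + m = n * p → ∀ h (j : Fin n),
      (∏ i ∈ Finset.univ.filter fun i : Fin p => t ≤ ((O.symm (j, i)) : ℕ),
        gval O j i t h) ≤
      (Finset.univ.filter fun c : Bundle n p =>
        (∀ i : Fin p, ((O.symm (j, i)) : ℕ) < t → c i = h (O.symm (j, i))) ∧
        ¬ P j c (F t h j)).card := by
  intro m
  induction m with
  | zero =>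
    intro t htm h j
    obtain rfl : t = n * p := by omega
    have hfe : (Finset.univ.filter fun i : Fin p =>
        n * p ≤ ((O.symm (j, i)) : ℕ)) = ∅ := by
      apply Finset.filter_false_of_mem
      intro i _
      have := (O.symm (j, i)).2
      omega
    rw [hfe, Finset.prod_empty]
    show 0 < _
    rw [Finset.card_pos]
    refine ⟨F (n * p) h j, ?_⟩
    simp only [mem_filter, mem_univ, true_and]
    refine ⟨fun i _ => (hF.1 h j i), ?_⟩
    exact (hP j).toIsStrictOrder.toIrrefl.irrefl _
  | succ m ih =>
    intro t htm h j
    have ht : t < n * p := by omega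
    obtain ⟨d, hdav, hFstep, hbest⟩ := hF.2 t ht h
    have hkey : ∀ (j' : Fin n) (i' : Fin p),
        O.symm (j', i') = ⟨t, ht⟩ ↔ j' = (O ⟨t, ht⟩).1 ∧ i' = (O ⟨t, ht⟩).2 := by
      intro j' i'
      rw [Equiv.symm_apply_eq, Prod.ext_iff]
    by_cases hjj : j = (O ⟨t, ht⟩).1
    · -- agent j moves at round t
      subst hjj
      set j0 := (O ⟨t, ht⟩).1 with hj0
      set i0 := (O ⟨t, ht⟩).2 with hi0def
      have htau0 : O.symm (j0, i0) = ⟨t, ht⟩ := by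
        rw [hkey]; exact ⟨rfl, rfl⟩
      -- the filter splits off i0
      have hi0new : i0 ∉ Finset.univ.filter fun i : Fin p =>
          t + 1 ≤ ((O.symm (j0, i)) : ℕ) := by
        simp only [mem_filter, mem_univ, true_and, not_le]
        rw [htau0]; show t < t + 1; omega
      have hsplit : (Finset.univ.filter fun i : Fin p => t ≤ ((O.symm (j0, i)) : ℕ)) =
          insert i0 (Finset.univ.filter fun i : Fin p =>
            t + 1 ≤ ((O.symm (j0, i)) : ℕ)) := by
        ext i
        simp only [mem_filter, mem_univ, true_and, Finset.mem_insert]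
        constructor
        · intro hh
          rcases eq_or_lt_of_le hh with hh' | hh'
          · left
            have : O.symm (j0, i) = ⟨t, ht⟩ := Fin.ext hh'.symm
            exact ((hkey j0 i).1 this).2
          · right; omega
        · rintro (rfl | hh)
          · rw [htau0]
          · omega
      rw [hsplit, Finset.prod_insert hi0new]
      -- gval at i0 is just the number of available items
      have hgi0 : gval O j0 i0 t h =
          (Finset.univ.filter fun e : Fin n => availH O h t i0 e).card := by
        unfold gval
        have : (Finset.univ.filter fun t' : Fin (n * p) =>
            t ≤ (t' : ℕ) ∧ (t' : ℕ) < ((O.symm (j0, i0)) : ℕ) ∧ (O t').2 = i0) = ∅ := by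
          apply Finset.filter_false_of_mem
          intro t' _
          rw [htau0]
          rintro ⟨h1, h2, _⟩
          simp only [Fin.val_mk] at h2 h1
          omega
        rw [this, Finset.card_empty, Nat.sub_zero]
      set A0 := Finset.univ.filter fun e : Fin n => availH O h t i0 e with hA0
      set Q := ∏ i ∈ Finset.univ.filter fun i : Fin p =>
          t + 1 ≤ ((O.symm (j0, i)) : ℕ), gval O j0 i t h with hQ
      -- for each available item e, bound via IH
      have hQe : ∀ e ∈ A0, Q ≤ (Finset.univ.filter fun c : Bundle n p =>
          (∀ i : Fin p, ((O.symm (j0, i)) : ℕ) < t + 1 →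
            c i = Function.update h ⟨t, ht⟩ e (O.symm (j0, i))) ∧
          ¬ P j0 c (F (t + 1) (Function.update h ⟨t, ht⟩ e) j0)).card := by
        intro e heA
        have he : availH O h t i0 e := by
          simpa [hA0] using heA
        have := ih (t + 1) (by omega) (Function.update h ⟨t, ht⟩ e) j0
        refine le_trans ?_ this
        apply le_of_eq
        rw [hQ]
        apply Finset.prod_congr rfl
        intro i hi
        simp only [mem_filter, mem_univ, true_and] at hi
        exact (gval_succ O j0 t ht h i hi e he).symm
      -- each such set is contained in the target set; they are disjoint in the i0 component
      set Starget := Finset.univ.filter fun c : Bundle n p =>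
          (∀ i : Fin p, ((O.symm (j0, i)) : ℕ) < t → c i = h (O.symm (j0, i))) ∧
          ¬ P j0 c (F t h j0) with hStarget
      set S' : Fin n → Finset (Bundle n p) := fun e =>
          Finset.univ.filter fun c : Bundle n p =>
          (∀ i : Fin p, ((O.symm (j0, i)) : ℕ) < t + 1 →
            c i = Function.update h ⟨t, ht⟩ e (O.symm (j0, i))) ∧
          ¬ P j0 c (F (t + 1) (Function.update h ⟨t, ht⟩ e) j0) with hS'
      have hci0 : ∀ e, ∀ c ∈ S' e, c i0 = e := by
        intro e c hc
        simp only [hS', mem_filter, mem_univ, true_and] at hc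
        have := hc.1 i0 (by rw [htau0]; show t < t + 1; omega)
        rwa [htau0, Function.update_self] at this
      have hsub : ∀ e ∈ A0, S' e ⊆ Starget := by
        intro e heA c hc
        have hce := hci0 e c hc
        simp only [hS', mem_filter, mem_univ, true_and] at hc
        obtain ⟨hc1, hc2⟩ := hc
        have he : availH O h t i0 e := by simpa [hA0] using heA
        simp only [hStarget, mem_filter, mem_univ, true_and]
        constructor
        · intro i hi
          have := hc1 i (by omega)
          rwa [Function.update_of_ne (by
            intro hh
            rw [hh] at hi
            simp at hi)] at this
        · rcases eq_or_ne e d with rfl | hed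
          · rw [hFstep]; exact hc2
          · rcases hbest e he hed with heq | hpref
            · rw [hFstep, ← hi0def, ← hj0] at *
              rw [heq]; exact hc2
            · intro hcb
              apply hc2
              have htr := (hP j0).toIsStrictOrder.toIsTrans.trans
              refine htr c (F t h j0) _ hcb ?_
              rw [hFstep]
              exact hpref
      have hdisj : ∀ e1 ∈ A0, ∀ e2 ∈ A0, e1 ≠ e2 → Disjoint (S' e1) (S' e2) := by
        intro e1 _ e2 _ hne
        rw [Finset.disjoint_left]
        intro c hc1 hc2
        exact hne ((hci0 e1 c hc1).symm.trans (hci0 e2 c hc2))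
      have hbu : A0.biUnion S' ⊆ Starget := by
        intro c hc
        rw [Finset.mem_biUnion] at hc
        obtain ⟨e, heA, hce⟩ := hc
        exact hsub e heA hce
      calc gval O j0 i0 t h * Q = ∑ _e ∈ A0, Q := by
            rw [Finset.sum_const, hgi0, smul_eq_mul, hA0]
        _ ≤ ∑ e ∈ A0, (S' e).card := Finset.sum_le_sum hQe
        _ = (A0.biUnion S').card := (Finset.card_biUnion hdisj).symm
        _ ≤ Starget.card := Finset.card_le_card hbu
    · -- some other agent moves at round t
      have hne_t : ∀ i : Fin p, ((O.symm (j, i)) : ℕ) ≠ t := by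
        intro i hh
        exact hjj ((hkey j i).1 (Fin.ext hh)).1
      have hfilter : (Finset.univ.filter fun i : Fin p => t ≤ ((O.symm (j, i)) : ℕ)) =
          Finset.univ.filter fun i : Fin p => t + 1 ≤ ((O.symm (j, i)) : ℕ) := by
        ext i
        simp only [mem_filter, mem_univ, true_and]
        have := hne_t i
        omega
      have hSeq : (Finset.univ.filter fun c : Bundle n p =>
          (∀ i : Fin p, ((O.symm (j, i)) : ℕ) < t → c i = h (O.symm (j, i))) ∧
          ¬ P j c (F t h j)) =
          Finset.univ.filter fun c : Bundle n p =>
          (∀ i : Fin p, ((O.symm (j, i)) : ℕ) < t + 1 →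
            c i = Function.update h ⟨t, ht⟩ d (O.symm (j, i))) ∧
          ¬ P j c (F (t + 1) (Function.update h ⟨t, ht⟩ d) j) := by
        ext c
        simp only [mem_filter, mem_univ, true_and]
        rw [← hFstep]
        constructor
        · rintro ⟨h1, h2⟩
          refine ⟨fun i hi => ?_, h2⟩
          have hi' : ((O.symm (j, i)) : ℕ) < t := by have := hne_t i; omega
          rw [Function.update_of_ne (by
            intro hh; rw [hh] at hi'; simp at hi')]
          exact h1 i hi'
        · rintro ⟨h1, h2⟩
          refine ⟨fun i hi => ?_, h2⟩
          have := h1 i (by omega)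
          rwa [Function.update_of_ne (by
            intro hh; rw [hh] at hi; simp at hi)] at this
      rw [hSeq, hfilter]
      refine le_trans (le_of_eq ?_) (ih (t + 1) (by omega) (Function.update h ⟨t, ht⟩ d) j)
      apply Finset.prod_congr rfl
      intro i hi
      simp only [mem_filter, mem_univ, true_and] at hi
      exact (gval_succ O j t ht h i hi d hdav).symm

/-- At the root, `gval` equals `kval`. -/
lemma gval_zero (O : Csam n p) (j : Fin n) (i : Fin p) (h : Fin (n * p) → Fin n) :
    gval O j i 0 h = kval O j i := by
  unfold gval
  have hA : (Finset.univ.filter fun d : Fin n => availH O h 0 i d) = Finset.univ := by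
    apply Finset.filter_true_of_mem
    intro d _
    intro t' ht' _
    omega
  have hBij : (Finset.univ.filter fun t' : Fin (n * p) =>
      0 ≤ (t' : ℕ) ∧ (t' : ℕ) < ((O.symm (j, i)) : ℕ) ∧ (O t').2 = i).card =
      (Finset.univ.filter fun j' : Fin n => O.symm (j', i) < O.symm (j, i)).card := by
    apply Finset.card_bij (fun t' _ => (O t').1)
    · intro t' ht'
      simp only [Finset.mem_filter, Finset.mem_univ, true_and] at ht' ⊢
      obtain ⟨_, h2, h3⟩ := ht'
      have : O.symm ((O t').1, i) = t' := by
        rw [← h3]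
        exact O.symm_apply_apply t'
      rw [this, Fin.lt_def]
      exact h2
    · intro t1 h1 t2 h2 heq
      simp only [Finset.mem_filter, Finset.mem_univ, true_and] at h1 h2
      have e1 : O.symm ((O t1).1, i) = t1 := by rw [← h1.2.2]; exact O.symm_apply_apply t1
      have e2 : O.symm ((O t2).1, i) = t2 := by rw [← h2.2.2]; exact O.symm_apply_apply t2
      rw [← e1, ← e2, heq]
    · intro j' hj'
      simp only [Finset.mem_filter, Finset.mem_univ, true_and] at hj'
      refine ⟨O.symm (j', i), ?_, ?_⟩
      · simp only [Finset.mem_filter, Finset.mem_univ, true_and]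
        exact ⟨Nat.zero_le _, hj', by simp⟩
      · simp
  rw [hA, hBij, Finset.card_univ, Fintype.card_fin]
  have hparts := Finset.card_filter_add_card_filter_not
    (s := (Finset.univ : Finset (Fin n)))
    (p := fun j' : Fin n => O.symm (j', i) < O.symm (j, i))
  rw [Finset.card_univ, Fintype.card_fin] at hparts
  have hneg : (Finset.univ.filter fun j' : Fin n => ¬ O.symm (j', i) < O.symm (j, i)) =
      insert j (Finset.univ.filter fun j' : Fin n => O.symm (j, i) < O.symm (j', i)) := by
    ext j'
    simp only [Finset.mem_filter, Finset.mem_univ, true_and, Finset.mem_insert, not_lt]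
    constructor
    · intro hh
      rcases eq_or_lt_of_le hh with hh' | hh'
      · left
        have : (j, i) = (j', i) := by
          rw [← O.apply_symm_apply (j, i), ← O.apply_symm_apply (j', i), hh']
        exact (Prod.ext_iff.1 this).1.symm
      · right; exact hh'
    · rintro (rfl | hh)
      · exact le_refl _
      · exact le_of_lt hh
  have hjnot : j ∉ Finset.univ.filter fun j' : Fin n =>
      O.symm (j, i) < O.symm (j', i) := by
    simp
  rw [hneg, Finset.card_insert_of_notMem hjnot] at hparts
  unfold kval
  omega

end Auxiliary

theorem statement17 (n p : ℕ) (hn : 0 < n) (hp : 0 < p) (O : Csam n p)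
    (P : Profile n p) (hP : ValidProfile P)
    (F : ℕ → (Fin (n * p) → Fin n) → Fin n → Bundle n p)
    (hF : BIOutcome O P F)
    (h0 : Fin (n * p) → Fin n) (j : Fin n) :
    rank (P j) (F 0 h0 j) ≤ n ^ p + 1 - ∏ i : Fin p, kval O j i := by
  have hkeym := key_invariant O P hP F hF (n * p) 0 (by omega) h0 j
  have hf0 : (Finset.univ.filter fun i : Fin p => 0 ≤ ((O.symm (j, i)) : ℕ)) =
      Finset.univ := Finset.filter_true_of_mem (fun _ _ => Nat.zero_le _)
  rw [hf0] at hkeym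
  have hprod : (∏ i : Fin p, gval O j i 0 h0) = ∏ i : Fin p, kval O j i :=
    Finset.prod_congr rfl (fun i _ => gval_zero O j i h0)
  rw [hprod] at hkeym
  have hS0 : (Finset.univ.filter fun c : Bundle n p =>
      (∀ i : Fin p, ((O.symm (j, i)) : ℕ) < 0 → c i = h0 (O.symm (j, i))) ∧
      ¬ P j c (F 0 h0 j)) =
      Finset.univ.filter fun c : Bundle n p => ¬ P j c (F 0 h0 j) := by
    apply Finset.filter_congr
    intro c _
    simp only [Nat.not_lt_zero, false_implies, imp_self, implies_true, true_and]
  rw [hS0] at hkeym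
  have hparts := Finset.card_filter_add_card_filter_not
    (s := (Finset.univ : Finset (Bundle n p)))
    (p := fun c : Bundle n p => P j c (F 0 h0 j))
  have hcard : (Finset.univ : Finset (Bundle n p)).card = n ^ p := by
    rw [Finset.card_univ]
    simp [Fintype.card_fun]
  rw [hcard] at hparts
  unfold rank
  omega
end

section
/- For n = 2 strategic agents with complete and perfect information, for every CSAM f_O over p categories there exists a preference profile such that in the subgame-perfect Nash equilibrium, for each agent j ∈ {1,2} the rank of the bundle allocated to agent j is exactly 2^p + 1 − ∏_{i=1}^{p} k_{j,i}. -/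
open scoped Classical

noncomputable def csamW {p : ℕ} (s : Finset (Fin p)) : Fin p ≃ Fin p :=
  (Equiv.sumCompl (· ∈ s)).symm.trans
    ((Equiv.sumCongr (Equiv.refl _)
        (Equiv.subtypeEquivRight (fun x => (Finset.mem_compl (a := x)).symm))).trans
      ((Equiv.sumCongr s.equivFin sᶜ.equivFin).trans
        (finSumFinEquiv.trans (finCongr (by
          rw [Finset.card_add_card_compl]; exact Fintype.card_fin p)))))

lemma csamW_lt_iff {p : ℕ} (s : Finset (Fin p)) (i : Fin p) :
    (csamW s i : ℕ) < s.card ↔ i ∈ s := by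
  unfold csamW
  by_cases hi : i ∈ s
  · simp [Equiv.sumCompl_symm_apply_of_pos hi, hi]
  · simp [Equiv.sumCompl_symm_apply_of_neg hi, hi]

noncomputable def csamV {p : ℕ} (s : Finset (Fin p)) : (Fin p → Fin 2) ≃ Fin (2 ^ p) :=
  (Equiv.arrowCongr (csamW s) (Equiv.refl (Fin 2))).trans finFunctionFinEquiv

lemma csamV_apply {p : ℕ} (s : Finset (Fin p)) (b : Fin p → Fin 2) :
    (csamV s b : ℕ) = ∑ t : Fin p, (b ((csamW s).symm t) : ℕ) * 2 ^ (t : ℕ) := by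
  simp [csamV, finFunctionFinEquiv_apply, Equiv.arrowCongr]

lemma csamV_sep {p : ℕ} (s : Finset (Fin p)) (i0 : Fin p) (b b' : Fin p → Fin 2)
    (h0 : b i0 = 0) (h1 : b' i0 = 1) (he : ∀ i, i ≠ i0 → b i = b' i) :
    (csamV s b : ℕ) < (csamV s b' : ℕ) := by
  set W := csamW s
  set t0 := W i0 with ht0
  have hsum : ∀ g : Fin p → Fin 2, (csamV s g : ℕ) =
      (g (W.symm t0) : ℕ) * 2 ^ (t0 : ℕ) +
        ∑ t ∈ Finset.univ.erase t0, (g (W.symm t) : ℕ) * 2 ^ (t : ℕ) := by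
    intro g
    rw [csamV_apply, ← Finset.add_sum_erase _ _ (Finset.mem_univ t0)]
  have hW : W.symm t0 = i0 := Equiv.symm_apply_apply W i0
  have hrest : ∀ t ∈ Finset.univ.erase t0,
      (b (W.symm t) : ℕ) * 2 ^ (t : ℕ) = (b' (W.symm t) : ℕ) * 2 ^ (t : ℕ) := by
    intro t htm
    have hne : W.symm t ≠ i0 := by
      intro he'
      exact (Finset.mem_erase.mp htm).1 (by rw [ht0, ← he', Equiv.apply_symm_apply])
    rw [he _ hne]
  rw [hsum b, hsum b', hW, h0, h1, Finset.sum_congr rfl hrest]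
  have hpos : (0 : ℕ) < 2 ^ (t0 : ℕ) := pow_pos (by norm_num) _
  simp only [Fin.val_zero, Fin.val_one, Nat.zero_mul, Nat.one_mul, Nat.zero_add]
  omega

lemma csamV_rankcard {p : ℕ} (s : Finset (Fin p)) (b : Fin p → Fin 2) :
    (Finset.univ.filter fun c : Fin p → Fin 2 => (csamV s c : ℕ) < (csamV s b : ℕ)).card
      = (csamV s b : ℕ) := by
  have h1 : (Finset.univ.filter fun c : Fin p → Fin 2 => (csamV s c : ℕ) < (csamV s b : ℕ)).card
      = (Finset.univ.filter fun y : Fin (2 ^ p) => (y : ℕ) < (csamV s b : ℕ)).card := by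
    apply Finset.card_bij (fun c _ => csamV s c)
    · intro a ha; simp at ha ⊢; exact ha
    · intro a ha a' ha' hh; exact (csamV s).injective hh
    · intro y hy
      simp only [Finset.mem_filter, Finset.mem_univ, true_and] at hy
      exact ⟨(csamV s).symm y, by
        simp only [Finset.mem_filter, Finset.mem_univ, true_and,
          Equiv.apply_symm_apply]; exact hy, (csamV s).apply_symm_apply y⟩
  rw [h1]
  have h2 : (Finset.univ.filter fun y : Fin (2 ^ p) => (y : ℕ) < (csamV s b : ℕ))
      = Finset.Iio (csamV s b) := by
    ext y
    simp only [Finset.mem_filter, Finset.mem_univ, true_and, Finset.mem_Iio, Fin.lt_def]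
  rw [h2, Fin.card_Iio]

lemma two_pow_sum (n : ℕ) : ∑ k ∈ Finset.range n, 2 ^ k = 2 ^ n - 1 := by
  induction n with
  | zero => simp
  | succ n ih =>
    rw [Finset.sum_range_succ, ih, pow_succ]
    have : 1 ≤ 2 ^ n := Nat.one_le_two_pow
    omega

lemma if_pow_sum {p m : ℕ} (hm : m ≤ p) :
    ∑ k ∈ Finset.range p, (if k < m then 0 else 2 ^ k) = 2 ^ p - 2 ^ m := by
  have hsplit : (∑ k ∈ Finset.range p, (if k < m then 0 else 2 ^ k))
      + ∑ k ∈ Finset.range p, (if k < m then 2 ^ k else 0) = ∑ k ∈ Finset.range p, 2 ^ k := by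
    rw [← Finset.sum_add_distrib]
    apply Finset.sum_congr rfl
    intro k _
    split_ifs <;> omega
  have h2 : ∑ k ∈ Finset.range p, (if k < m then 2 ^ k else 0) = ∑ k ∈ Finset.range m, 2 ^ k := by
    rw [← Finset.sum_filter]
    apply Finset.sum_congr _ (fun _ _ => rfl)
    ext k
    simp only [Finset.mem_filter, Finset.mem_range]
    omega
  rw [h2, two_pow_sum, two_pow_sum] at hsplit
  have hle : (2:ℕ) ^ m ≤ 2 ^ p := Nat.pow_le_pow_right (by norm_num) hm
  have h1 : 1 ≤ 2 ^ m := Nat.one_le_two_pow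
  omega
lemma fin2_cases : ∀ a b : Fin 2, a = b ∨ a = b + 1 := by decide
lemma fin2_ne : ∀ a b : Fin 2, a ≠ b → a = b + 1 := by decide
lemma fin2_add11 : ∀ a : Fin 2, a + 1 + 1 = a := by decide
lemma fin2_add1_ne : ∀ a : Fin 2, a + 1 ≠ a := by decide

lemma kval_eq {p : ℕ} (O : Csam 2 p) (j : Fin 2) (i : Fin p) :
    kval O j i = if O.symm (j, i) < O.symm (j + 1, i) then 2 else 1 := by
  unfold kval
  rw [Finset.card_filter, Fin.sum_univ_two]
  rcases (by decide : ∀ a : Fin 2, a = 0 ∨ a = 1) j with rfl | rfl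
  · rw [(by decide : (0 : Fin 2) + 1 = 1), if_neg (lt_irrefl (O.symm (0, i)))]
    split_ifs <;> omega
  · rw [(by decide : (1 : Fin 2) + 1 = 0), if_neg (lt_irrefl (O.symm (1, i)))]
    split_ifs <;> omega

lemma prod_kval {p : ℕ} (O : Csam 2 p) (j : Fin 2) :
    ∏ i : Fin p, kval O j i
      = 2 ^ (Finset.univ.filter fun i : Fin p => O.symm (j, i) < O.symm (j + 1, i)).card := by
  set s := Finset.univ.filter fun i : Fin p => O.symm (j, i) < O.symm (j + 1, i) with hs
  have h1 : ∀ i : Fin p, kval O j i = if i ∈ s then 2 else 1 := by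
    intro i
    rw [kval_eq]
    exact if_congr (by simp [hs]) rfl rfl
  rw [Finset.prod_congr rfl (fun i _ => h1 i), Finset.prod_ite_mem, Finset.univ_inter,
    Finset.prod_const]

lemma csamV_alloc {p : ℕ} (s : Finset (Fin p)) :
    (csamV s (fun i => if i ∈ s then 0 else 1) : ℕ) = 2 ^ p - 2 ^ s.card := by
  rw [csamV_apply]
  have hmem : ∀ t : Fin p, ((csamW s).symm t ∈ s) ↔ (t : ℕ) < s.card := by
    intro t; rw [← csamW_lt_iff s, Equiv.apply_symm_apply]
  have hterm : ∀ t : Fin p,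
      (Fin.val (if (csamW s).symm t ∈ s then (0 : Fin 2) else 1)) * 2 ^ (t : ℕ)
        = if (t : ℕ) < s.card then 0 else 2 ^ (t : ℕ) := by
    intro t
    by_cases hc : (t : ℕ) < s.card
    · rw [if_pos ((hmem t).mpr hc), if_pos hc]; simp
    · rw [if_neg (fun hh => hc ((hmem t).mp hh)), if_neg hc]; simp
  rw [Finset.sum_congr rfl (fun t _ => hterm t),
    Fin.sum_univ_eq_sum_range (fun k => if k < s.card then 0 else 2 ^ k) p]
  exact if_pow_sum (by simpa using Finset.card_le_univ s)

def csamS {p : ℕ} (O : Csam 2 p) (j : Fin 2) : Finset (Fin p) :=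
  Finset.univ.filter fun i => O.symm (j, i) < O.symm (j + 1, i)

noncomputable def csamP {p : ℕ} (O : Csam 2 p) : Profile 2 p :=
  fun j b b' => (csamV (csamS O j) b : ℕ) < (csamV (csamS O j) b' : ℕ)

def csamBi {p : ℕ} (O : Csam 2 p) (t : ℕ) (h : Fin (2 * p) → Fin 2) (j : Fin 2)
    (i : Fin p) : Fin 2 :=
  if (O.symm (j, i) : ℕ) < t then h (O.symm (j, i))
  else if (O.symm (j + 1, i) : ℕ) < t then h (O.symm (j + 1, i)) + 1
  else if O.symm (j, i) < O.symm (j + 1, i) then 0 else 1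

lemma csamBi_step {p : ℕ} (O : Csam 2 p) (t : ℕ) (ht : t < 2 * p) (h : Fin (2 * p) → Fin 2)
    (d : Fin 2) (hd : d = csamBi O t h (O ⟨t, ht⟩).1 (O ⟨t, ht⟩).2) (j : Fin 2) (i : Fin p) :
    csamBi O (t + 1) (Function.update h ⟨t, ht⟩ d) j i = csamBi O t h j i := by
  set j0 := (O ⟨t, ht⟩).1 with hj0
  set i0 := (O ⟨t, ht⟩).2 with hi0
  have hsymm : O.symm (j0, i0) = ⟨t, ht⟩ := by
    rw [hj0, hi0, Prod.mk.eta, Equiv.symm_apply_apply]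
  have hvt : ((⟨t, ht⟩ : Fin (2 * p)) : ℕ) = t := rfl
  by_cases hii : i = i0
  · subst hii
    rcases fin2_cases j j0 with rfl | rfl
    · rw [← hd]
      unfold csamBi
      rw [hsymm, if_pos (by rw [hvt]; omega), Function.update_self]
    · have hj1 : j0 + 1 + 1 = j0 := fin2_add11 j0
      have hner : O.symm (j0 + 1, i0) ≠ ⟨t, ht⟩ := by
        intro e
        rw [← hsymm] at e
        exact fin2_add1_ne j0 (congrArg Prod.fst (O.symm.injective e))
      have hnet : (O.symm (j0 + 1, i0) : ℕ) ≠ t := fun hv => hner (Fin.ext hv)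
      by_cases hc : (O.symm (j0 + 1, i0) : ℕ) < t
      · unfold csamBi
        rw [if_pos (by omega), if_pos hc, Function.update_of_ne hner]
      · have hd0 : d = 0 := by
          rw [hd]
          unfold csamBi
          rw [hsymm, if_neg (by rw [hvt]; omega), if_neg hc,
            if_pos (by rw [Fin.lt_def, hvt]; omega)]
        have hL : csamBi O (t + 1) (Function.update h ⟨t, ht⟩ d) (j0 + 1) i0 = d + 1 := by
          unfold csamBi
          rw [if_neg (show ¬ (O.symm (j0 + 1, i0) : ℕ) < t + 1 by omega), hj1, hsymm,
            if_pos (show ((⟨t, ht⟩ : Fin (2 * p)) : ℕ) < t + 1 by rw [hvt]; omega),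
            Function.update_self]
        have hR : csamBi O t h (j0 + 1) i0 = 1 := by
          unfold csamBi
          rw [if_neg hc, hj1, hsymm,
            if_neg (show ¬ ((⟨t, ht⟩ : Fin (2 * p)) : ℕ) < t by rw [hvt]; omega),
            if_neg (show ¬ O.symm (j0 + 1, i0) < (⟨t, ht⟩ : Fin (2 * p)) by
              rw [Fin.lt_def, hvt]; omega)]
        rw [hL, hR, hd0]
        decide
  · have hne1 : O.symm (j, i) ≠ ⟨t, ht⟩ := by
      intro e
      rw [← hsymm] at e
      exact hii (congrArg Prod.snd (O.symm.injective e))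
    have hne2 : O.symm (j + 1, i) ≠ ⟨t, ht⟩ := by
      intro e
      rw [← hsymm] at e
      exact hii (congrArg Prod.snd (O.symm.injective e))
    have hv1 : (O.symm (j, i) : ℕ) ≠ t := fun hv => hne1 (Fin.ext hv)
    have hv2 : (O.symm (j + 1, i) : ℕ) ≠ t := fun hv => hne2 (Fin.ext hv)
    unfold csamBi
    rw [Function.update_of_ne hne1, Function.update_of_ne hne2]
    exact if_congr (by omega) rfl (if_congr (by omega) rfl rfl)

lemma F_eq_csamBi {p : ℕ} (O : Csam 2 p) (F : ℕ → (Fin (2 * p) → Fin 2) → Fin 2 → Bundle 2 p)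
    (hF : BIOutcome O (csamP O) F) :
    ∀ k t, t + k = 2 * p → ∀ h j i, F t h j i = csamBi O t h j i := by
  intro k
  induction k with
  | zero =>
    intro t htk h j i
    have ht : t = 2 * p := by omega
    subst ht
    rw [hF.1 h j i]
    unfold csamBi
    rw [if_pos (O.symm (j, i)).isLt]
  | succ k ih =>
    intro t htk h j i
    have ht : t < 2 * p := by omega
    obtain ⟨d, havail, heq, hopt⟩ := hF.2 t ht h
    set j0 := (O ⟨t, ht⟩).1 with hj0
    set i0 := (O ⟨t, ht⟩).2 with hi0
    have hsymm : O.symm (j0, i0) = ⟨t, ht⟩ := by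
      rw [hj0, hi0, Prod.mk.eta, Equiv.symm_apply_apply]
    have hvt : ((⟨t, ht⟩ : Fin (2 * p)) : ℕ) = t := rfl
    have hround : ∀ t' : Fin (2 * p), (O t').2 = i0 →
        t' = ⟨t, ht⟩ ∨ t' = O.symm (j0 + 1, i0) := by
      intro t' hcat
      have h1 : t' = O.symm ((O t').1, i0) := by
        rw [← hcat, Prod.mk.eta, Equiv.symm_apply_apply]
      rcases fin2_cases (O t').1 j0 with he | he
      · left; rw [h1, he, hsymm]
      · right; rw [h1, he]
    have hner : O.symm (j0 + 1, i0) ≠ ⟨t, ht⟩ := by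
      intro e
      rw [← hsymm] at e
      exact fin2_add1_ne j0 (congrArg Prod.fst (O.symm.injective e))
    have hnet : (O.symm (j0 + 1, i0) : ℕ) ≠ t := fun hv => hner (Fin.ext hv)
    have hd : d = csamBi O t h j0 i0 := by
      by_cases hc : (O.symm (j0 + 1, i0) : ℕ) < t
      · have hcat : (O (O.symm (j0 + 1, i0))).2 = i0 := by rw [Equiv.apply_symm_apply]
        have hne : h (O.symm (j0 + 1, i0)) ≠ d := havail (O.symm (j0 + 1, i0)) hc hcat
        unfold csamBi
        rw [hsymm, if_neg (by rw [hvt]; omega), if_pos hc]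
        exact fin2_ne d (h (O.symm (j0 + 1, i0))) (fun e => hne e.symm)
      · have hBi : csamBi O t h j0 i0 = 0 := by
          unfold csamBi
          rw [hsymm, if_neg (by rw [hvt]; omega), if_neg hc,
            if_pos (by rw [Fin.lt_def, hvt]; omega)]
        rw [hBi]
        by_contra hd1
        have hd1' : d = 1 := by
          have := fin2_ne d 0 hd1
          rw [this]; decide
        have havail0 : availH O h t i0 (0 : Fin 2) := by
          intro t' ht' hcat
          exfalso
          rcases hround t' hcat with rfl | rfl
          · exact Nat.lt_irrefl t ht'
          · exact hc ht'
        have hne0d : (0 : Fin 2) ≠ d := by rw [hd1']; decide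
        have hdisj := hopt 0 havail0 hne0d
        set b1 := F (t + 1) (Function.update h ⟨t, ht⟩ d) j0 with hb1
        set b0 := F (t + 1) (Function.update h ⟨t, ht⟩ 0) j0 with hb0
        have hb1i0 : b1 i0 = 1 := by
          rw [hb1, ih (t + 1) (by omega)]
          unfold csamBi
          rw [hsymm, if_pos (by rw [hvt]; omega), Function.update_self, hd1']
        have hb0i0 : b0 i0 = 0 := by
          rw [hb0, ih (t + 1) (by omega)]
          unfold csamBi
          rw [hsymm, if_pos (by rw [hvt]; omega), Function.update_self]
        have hag : ∀ i', i' ≠ i0 → b0 i' = b1 i' := by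
          intro i' hi'
          rw [hb0, hb1, ih (t + 1) (by omega), ih (t + 1) (by omega)]
          have hne1 : O.symm (j0, i') ≠ ⟨t, ht⟩ := by
            intro e
            rw [← hsymm] at e
            exact hi' (congrArg Prod.snd (O.symm.injective e))
          have hne2 : O.symm (j0 + 1, i') ≠ ⟨t, ht⟩ := by
            intro e
            rw [← hsymm] at e
            exact hi' (congrArg Prod.snd (O.symm.injective e))
          unfold csamBi
          rw [Function.update_of_ne hne1, Function.update_of_ne hne2,
            Function.update_of_ne hne1, Function.update_of_ne hne2]
        rcases hdisj with heqb | hpref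
        · have : (1 : Fin 2) = 0 := by rw [← hb1i0, ← hb0i0, heqb]
          exact absurd this (by decide)
        · have hsep := csamV_sep (csamS O j0) i0 b0 b1 hb0i0 hb1i0 hag
          simp only [csamP] at hpref
          omega
    calc F t h j i = F (t + 1) (Function.update h ⟨t, ht⟩ d) j i := by rw [heq]
      _ = csamBi O (t + 1) (Function.update h ⟨t, ht⟩ d) j i := by
          rw [ih (t + 1) (by omega)]
      _ = csamBi O t h j i := csamBi_step O t ht h d hd j i

theorem statement18 (p : ℕ) (hp : 0 < p) (O : Csam 2 p) :
    ∃ P : Profile 2 p, ValidProfile P ∧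
      ∀ F : ℕ → (Fin (2 * p) → Fin 2) → Fin 2 → Bundle 2 p,
        BIOutcome O P F →
        ∀ h0 : Fin (2 * p) → Fin 2, ∀ j : Fin 2,
          rank (P j) (F 0 h0 j) = 2 ^ p + 1 - ∏ i : Fin p, kval O j i := by
  refine ⟨csamP O, ?_, ?_⟩
  · intro j
    have hinj : Function.Injective fun b : Bundle 2 p => (csamV (csamS O j) b : ℕ) :=
      fun a b hab => (csamV (csamS O j)).injective (Fin.val_injective hab)
    exact { trichotomous := fun a b hab hba => by
              rcases lt_trichotomy (csamV (csamS O j) a : ℕ) (csamV (csamS O j) b : ℕ)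
                with h | h | h
              · exact absurd h hab
              · exact hinj h
              · exact absurd h hba,
            irrefl := fun a => lt_irrefl _,
            trans := fun a b c hab hbc => lt_trans hab hbc }
  · intro F hF h0 j
    have hmain := F_eq_csamBi O F hF (2 * p) 0 (by omega) h0 j
    have hA : F 0 h0 j = fun i => if i ∈ csamS O j then 0 else 1 := by
      funext i
      rw [hmain i]
      unfold csamBi
      rw [if_neg (by omega), if_neg (by omega)]
      exact if_congr (by simp [csamS]) rfl rfl
    rw [hA]
    have hprod : ∏ i : Fin p, kval O j i = 2 ^ (csamS O j).card := prod_kval O j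
    unfold rank
    have hr : (Finset.univ.filter fun c =>
        csamP O j c (fun i => if i ∈ csamS O j then 0 else 1)).card
          = (csamV (csamS O j) (fun i => if i ∈ csamS O j then 0 else 1) : ℕ) := by
      rw [← csamV_rankcard (csamS O j) (fun i => if i ∈ csamS O j then 0 else 1)]
      congr 1
      ext c
      simp [csamP]
    rw [hr, csamV_alloc, hprod]
    have hm : (csamS O j).card ≤ p := by simpa using Finset.card_le_univ (csamS O j)
    have hle : (2 : ℕ) ^ (csamS O j).card ≤ 2 ^ p := Nat.pow_le_pow_right (by norm_num) hm
    have h1 : 1 ≤ (2 : ℕ) ^ (csamS O j).card := Nat.one_le_two_pow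
    omega
end

section
/- In the extensive-form game induced by a CSAM, define A_{j,t} recursively by A_{j,np} = 1 and, if O(t) = (j,i), A_{j,t−1} = k_{j,i} · A_{j,t} while A_{j',t−1} = A_{j',t} for j' ≠ j. Then for every node N of the backward-induction tree at round t and every agent j, at least A_{j,t} − 1 of the bundles agent j receives at the leaves of the subtree rooted at N are ranked strictly below the bundle agent j receives at N's backward-induction outcome; in particular A_{j,1} = ∏_{i ≤ p} k_{j,i}. -/
open scoped Classical

/-- `Aval O j t`: the recursively defined quantity `A_{j,t}` (0-based rounds):
`A_{j, n*p} = 1` and, if round `t` is agent `j` picking from category `i`,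
`A_{j,t} = k_{j,i} * A_{j,t+1}`, unchanged for other agents. -/
def Aval {n p : ℕ} (O : Csam n p) (j : Fin n) (t : ℕ) : ℕ :=
  ∏ t' : Fin (n * p),
    if t ≤ (t' : ℕ) ∧ (O t').1 = j then kval O j (O t').2 else 1


/-! ### Auxiliary lemmas -/

lemma arith1 (A c1 c2 : ℕ) (k1 : 0 < A) (k2 : A - 1 ≤ c1) (k3 : c1 + 1 ≤ c2) : A ≤ c2 := by
  omega

lemma arith2 (A K S C : ℕ) (k1 : 0 < A) (k2 : A ≤ K) (k3 : (A - 1) + (K - A) ≤ S)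
    (k4 : S ≤ C) : K - 1 ≤ C := by
  omega

lemma downInd (N : ℕ) (Q : ℕ → Prop) (base : Q N)
    (step : ∀ t, t < N → Q (t+1) → Q t) : ∀ t, t ≤ N → Q t := by
  have key : ∀ k, k ≤ N → Q (N - k) := by
    intro k
    induction k with
    | zero => intro _; simpa using base
    | succ k ih =>
      intro hk
      have h1 : N - (k+1) < N := by omega
      have h2 : N - k = (N - (k+1)) + 1 := by omega
      exact step _ h1 (h2 ▸ ih (by omega))
  intro t ht
  have := key (N - t) (by omega)
  rwa [Nat.sub_sub_self ht] at this

lemma availH_congr {n p : ℕ} (O : Csam n p) {h1 h2 : Fin (n*p) → Fin n} {t : ℕ}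
    (hh : ∀ t' : Fin (n*p), (t' : ℕ) < t → h1 t' = h2 t') {i : Fin p} {d : Fin n} :
    availH O h1 t i d ↔ availH O h2 t i d := by
  constructor <;> intro H t' ht' hi
  · rw [← hh t' ht']; exact H t' ht' hi
  · rw [hh t' ht']; exact H t' ht' hi

lemma kval_pos {n p : ℕ} (O : Csam n p) (j : Fin n) (i : Fin p) : 0 < kval O j i := by
  unfold kval; omega

lemma Aval_pos {n p : ℕ} (O : Csam n p) (j : Fin n) (t : ℕ) : 0 < Aval O j t := by
  apply Finset.prod_pos
  intro t' _
  split
  · exact kval_pos O j _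
  · exact one_pos

lemma Aval_last {n p : ℕ} (O : Csam n p) (j : Fin n) : Aval O j (n*p) = 1 := by
  apply Finset.prod_eq_one
  intro t' _
  have h := t'.isLt
  simp [Nat.not_le.mpr h]

lemma Aval_step {n p : ℕ} (O : Csam n p) (j : Fin n) (t : ℕ) (ht : t < n*p) :
    Aval O j t = (if (O ⟨t, ht⟩).1 = j then kval O j (O ⟨t, ht⟩).2 else 1) * Aval O j (t+1) := by
  unfold Aval
  rw [← Finset.mul_prod_erase Finset.univ
        (fun t' : Fin (n*p) => if t ≤ (t' : ℕ) ∧ (O t').1 = j then kval O j (O t').2 else 1)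
        (Finset.mem_univ (⟨t, ht⟩ : Fin (n*p))),
      ← Finset.mul_prod_erase Finset.univ
        (fun t' : Fin (n*p) => if t+1 ≤ (t' : ℕ) ∧ (O t').1 = j then kval O j (O t').2 else 1)
        (Finset.mem_univ (⟨t, ht⟩ : Fin (n*p)))]
  have hgr : (if t+1 ≤ ((⟨t, ht⟩ : Fin (n*p)) : ℕ) ∧ (O ⟨t, ht⟩).1 = j
      then kval O j (O ⟨t, ht⟩).2 else 1) = 1 := by
    rw [if_neg]; rintro ⟨h1, _⟩; simp at h1
  have hfr : (if t ≤ ((⟨t, ht⟩ : Fin (n*p)) : ℕ) ∧ (O ⟨t, ht⟩).1 = j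
      then kval O j (O ⟨t, ht⟩).2 else 1)
      = (if (O ⟨t, ht⟩).1 = j then kval O j (O ⟨t, ht⟩).2 else 1) := by
    simp
  rw [hgr, hfr, one_mul]
  rw [mul_comm (if (O ⟨t, ht⟩).1 = j then kval O j (O ⟨t, ht⟩).2 else 1)]
  rw [mul_comm (if (O ⟨t, ht⟩).1 = j then kval O j (O ⟨t, ht⟩).2 else 1)]
  congr 1
  apply Finset.prod_congr rfl
  intro x hx
  have hxr : x ≠ ⟨t, ht⟩ := Finset.ne_of_mem_erase hx
  have hxv : (x : ℕ) ≠ t := fun hc => hxr (Fin.ext hc)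
  apply if_congr _ rfl rfl
  constructor
  · rintro ⟨h1, h2⟩; exact ⟨by omega, h2⟩
  · rintro ⟨h1, h2⟩; exact ⟨by omega, h2⟩

lemma kcount {n p : ℕ} (O : Csam n p) (h : Fin (n*p) → Fin n) (t : ℕ) (ht : t < n*p)
    (hval : ∀ t' : Fin (n*p), (t' : ℕ) < t → availH O h t' (O t').2 (h t')) :
    (Finset.univ.filter fun d : Fin n => availH O h t (O ⟨t, ht⟩).2 d).card
      = kval O (O ⟨t, ht⟩).1 (O ⟨t, ht⟩).2 := by
  have hsr : O.symm ((O ⟨t, ht⟩).1, (O ⟨t, ht⟩).2) = ⟨t, ht⟩ := by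
    rw [Prod.mk.eta, Equiv.symm_apply_apply]
  set T : Finset (Fin (n*p)) :=
    Finset.univ.filter (fun t' : Fin (n*p) => (t' : ℕ) < t ∧ (O t').2 = (O ⟨t, ht⟩).2) with hT
  have hinj : ∀ t1 ∈ T, ∀ t2 ∈ T, h t1 = h t2 → t1 = t2 := by
    intro t1 h1 t2 h2 hh
    rw [hT, Finset.mem_filter] at h1 h2
    rcases lt_trichotomy ((t1 : ℕ)) ((t2 : ℕ)) with hc | hc | hc
    · exact absurd hh (hval t2 h2.2.1 t1 hc (h1.2.2.trans h2.2.2.symm))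
    · exact Fin.ext hc
    · exact absurd hh.symm (hval t1 h1.2.1 t2 hc (h2.2.2.trans h1.2.2.symm))
  have himg : Finset.univ.filter (fun d : Fin n => availH O h t (O ⟨t, ht⟩).2 d)
      = Finset.univ \ T.image h := by
    ext d
    rw [Finset.mem_filter, Finset.mem_sdiff]
    constructor
    · refine fun ⟨_, H⟩ => ⟨Finset.mem_univ _, fun hc => ?_⟩
      obtain ⟨t', ht', hdd⟩ := Finset.mem_image.mp hc
      rw [hT, Finset.mem_filter] at ht'
      exact H t' ht'.2.1 ht'.2.2 hdd
    · refine fun ⟨_, H⟩ => ⟨Finset.mem_univ _, fun t' h1 h2 hdd => H ?_⟩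
      rw [Finset.mem_image]
      refine ⟨t', ?_, hdd⟩
      rw [hT, Finset.mem_filter]
      exact ⟨Finset.mem_univ _, h1, h2⟩
  have hcardAv : (Finset.univ.filter fun d : Fin n => availH O h t (O ⟨t, ht⟩).2 d).card
      = n - T.card := by
    rw [himg, Finset.card_sdiff_of_subset (Finset.subset_univ _), Finset.card_univ, Fintype.card_fin,
      Finset.card_image_of_injOn (fun a ha b hb => hinj a ha b hb)]
  set e : Fin n → Fin (n*p) := fun j' => O.symm (j', (O ⟨t, ht⟩).2) with he
  have heinj : Function.Injective e := by
    intro a b hab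
    have := O.symm.injective hab
    exact congrArg Prod.fst this
  have her : e (O ⟨t, ht⟩).1 = ⟨t, ht⟩ := hsr
  have hS2 : (Finset.univ.filter fun j' : Fin n => ¬ e j' < (⟨t, ht⟩ : Fin (n*p)))
      = insert (O ⟨t, ht⟩).1 (Finset.univ.filter fun j' : Fin n => (⟨t, ht⟩ : Fin (n*p)) < e j') := by
    ext j'
    rw [Finset.mem_filter, Finset.mem_insert, Finset.mem_filter]
    constructor
    · rintro ⟨_, hnl⟩
      rcases lt_trichotomy (e j') (⟨t, ht⟩ : Fin (n*p)) with hlt | heq2 | hgt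
      · exact absurd hlt hnl
      · left
        have : O (e j') = O ⟨t, ht⟩ := congrArg O heq2
        rw [he] at this
        simp only [Equiv.apply_symm_apply] at this
        exact congrArg Prod.fst this
      · exact Or.inr ⟨Finset.mem_univ _, hgt⟩
    · rintro (rfl | ⟨_, hgt⟩)
      · rw [her]; exact ⟨Finset.mem_univ _, lt_irrefl _⟩
      · exact ⟨Finset.mem_univ _, not_lt_of_gt hgt⟩
  have hnotmem : (O ⟨t, ht⟩).1 ∉
      (Finset.univ.filter fun j' : Fin n => (⟨t, ht⟩ : Fin (n*p)) < e j') := by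
    rw [Finset.mem_filter, her]
    rintro ⟨_, hc⟩; exact lt_irrefl _ hc
  have hS1 : (Finset.univ.filter fun j' : Fin n => e j' < (⟨t, ht⟩ : Fin (n*p))).card = T.card := by
    apply Finset.card_bij (fun j' _ => e j')
    · intro a ha
      rw [Finset.mem_filter] at ha
      rw [hT, Finset.mem_filter]
      refine ⟨Finset.mem_univ _, ha.2, ?_⟩
      rw [he]; simp
    · intro a _ b _ hab; exact heinj hab
    · intro b hb
      rw [hT, Finset.mem_filter] at hb
      refine ⟨(O b).1, ?_, ?_⟩
      all_goals {
        have hpair : ((O b).1, (O ⟨t, ht⟩).2) = O b := by rw [← hb.2.2]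
        have hEb : e (O b).1 = b := by
          simp only [he, hpair, Equiv.symm_apply_apply]
        first
        | (rw [Finset.mem_filter]
           refine ⟨Finset.mem_univ _, ?_⟩
           rw [hEb]
           exact Fin.mk_lt_of_lt_val hb.2.1)
        | exact hEb }
  have hsplit : (Finset.univ.filter fun j' : Fin n => e j' < (⟨t, ht⟩ : Fin (n*p))).card
      + (Finset.univ.filter fun j' : Fin n => ¬ e j' < (⟨t, ht⟩ : Fin (n*p))).card = n := by
    rw [Finset.card_filter_add_card_filter_not, Finset.card_univ, Fintype.card_fin]
  rw [hS2, Finset.card_insert_of_notMem hnotmem, hS1] at hsplit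
  have hTle : T.card < n := by omega
  rw [hcardAv]
  unfold kval
  rw [show O.symm ((O ⟨t, ht⟩).1, (O ⟨t, ht⟩).2) = (⟨t, ht⟩ : Fin (n*p)) from hsr]
  have hconv : (Finset.univ.filter fun j' : Fin n =>
      (⟨t, ht⟩ : Fin (n*p)) < O.symm (j', (O ⟨t, ht⟩).2))
      = (Finset.univ.filter fun j' : Fin n => (⟨t, ht⟩ : Fin (n*p)) < e j') := rfl
  rw [hconv]
  omega

lemma histF {n p : ℕ} (O : Csam n p) (P : Profile n p)
    (F : ℕ → (Fin (n * p) → Fin n) → Fin n → Bundle n p) (hF : BIOutcome O P F) :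
    ∀ t, t ≤ n*p → ∀ h : Fin (n*p) → Fin n, ∀ j : Fin n, ∀ i : Fin p,
      ((O.symm (j, i) : Fin (n*p)) : ℕ) < t → F t h j i = h (O.symm (j, i)) := by
  refine downInd (n*p) _ ?_ ?_
  · intro h j i _
    exact hF.1 h j i
  · intro t ht ih h j i hlt
    obtain ⟨d, hav, heq, _⟩ := hF.2 t ht h
    rw [heq, ih (Function.update h ⟨t, ht⟩ d) j i (by omega)]
    apply Function.update_of_ne
    intro hc2
    rw [hc2] at hlt
    simp at hlt

lemma upd_valid {n p : ℕ} (O : Csam n p) {h : Fin (n*p) → Fin n} {t : ℕ} (ht : t < n*p)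
    (hval : ∀ t' : Fin (n*p), (t' : ℕ) < t → availH O h t' (O t').2 (h t'))
    {d' : Fin n} (hd' : availH O h t (O ⟨t, ht⟩).2 d') :
    ∀ t' : Fin (n*p), (t' : ℕ) < t+1 →
      availH O (Function.update h ⟨t, ht⟩ d') t' (O t').2 (Function.update h ⟨t, ht⟩ d' t') := by
  intro t' ht'
  have hvt : ((⟨t, ht⟩ : Fin (n*p)) : ℕ) = t := rfl
  have hagree : ∀ t'' : Fin (n*p), (t'' : ℕ) < t → Function.update h ⟨t, ht⟩ d' t'' = h t'' := by
    intro t'' ht''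
    apply Function.update_of_ne
    intro hc2; rw [hc2] at ht''; simp at ht''
  rcases Nat.lt_or_ge ((t' : ℕ)) t with hc | hc
  · rw [hagree t' hc]
    refine (availH_congr O ?_).mpr (hval t' hc)
    intro t'' ht''
    exact hagree t'' (by omega)
  · have hte : t' = (⟨t, ht⟩ : Fin (n*p)) := Fin.ext (by omega)
    subst hte
    rw [Function.update_self]
    exact (availH_congr O (fun t'' ht'' => hagree t'' ht'')).mpr hd'

lemma leafF {n p : ℕ} (O : Csam n p) (P : Profile n p)
    (F : ℕ → (Fin (n * p) → Fin n) → Fin n → Bundle n p) (hF : BIOutcome O P F) :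
    ∀ t, t ≤ n*p → ∀ h : Fin (n*p) → Fin n,
      (∀ t' : Fin (n*p), (t' : ℕ) < t → availH O h t' (O t').2 (h t')) →
      ∃ hs : Fin (n*p) → Fin n,
        (∀ t' : Fin (n*p), (t' : ℕ) < t → hs t' = h t') ∧
        (∀ t' : Fin (n*p), t ≤ (t' : ℕ) → availH O hs t' (O t').2 (hs t')) ∧
        F (n*p) hs = F t h := by
  refine downInd (n*p) _ ?_ ?_
  · intro h hval
    exact ⟨h, fun t' _ => rfl, fun t' ht' => absurd t'.isLt (by omega), rfl⟩
  · intro t ht ih h hval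
    obtain ⟨d, hav, heq, _⟩ := hF.2 t ht h
    have hagree : ∀ t'' : Fin (n*p), (t'' : ℕ) < t →
        Function.update h ⟨t, ht⟩ d t'' = h t'' := by
      intro t'' ht''
      apply Function.update_of_ne
      intro hc2; rw [hc2] at ht''; simp at ht''
    obtain ⟨hs, h1, h2, h3⟩ := ih (Function.update h ⟨t, ht⟩ d) (upd_valid O ht hval hav)
    refine ⟨hs, ?_, ?_, ?_⟩
    · intro t' ht'
      rw [h1 t' (by omega), hagree t' ht']
    · intro t' ht'
      have hvt : ((⟨t, ht⟩ : Fin (n*p)) : ℕ) = t := rfl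
      rcases Nat.lt_or_ge ((t' : ℕ)) (t+1) with hc | hc
      · have hte : t' = (⟨t, ht⟩ : Fin (n*p)) := Fin.ext (by omega)
        subst hte
        have hsr : hs ⟨t, ht⟩ = d := by
          rw [h1 ⟨t, ht⟩ (by simp), Function.update_self]
        rw [hsr]
        refine (availH_congr O ?_).mpr hav
        intro t'' ht''
        rw [h1 t'' (by simp at ht'' ⊢; omega), hagree t'' (by simpa using ht'')]
      · exact h2 t' hc
    · rw [h3, heq]


theorem statement19 (n p : ℕ) (hn : 0 < n) (hp : 0 < p) (O : Csam n p)
    (P : Profile n p) (hP : ValidProfile P)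
    (F : ℕ → (Fin (n * p) → Fin n) → Fin n → Bundle n p)
    (hF : BIOutcome O P F) :
    (∀ j : Fin n, Aval O j 0 = ∏ i : Fin p, kval O j i) ∧
    (∀ t : ℕ, t ≤ n * p → ∀ h : Fin (n * p) → Fin n,
      (∀ t' : Fin (n * p), (t' : ℕ) < t → availH O h t' (O t').2 (h t')) →
      ∀ j : Fin n,
        Aval O j t - 1 ≤
          (Finset.univ.filter (fun h' : Fin (n * p) → Fin n =>
            (∀ t' : Fin (n * p), (t' : ℕ) < t → h' t' = h t') ∧
            (∀ t' : Fin (n * p), t ≤ (t' : ℕ) → availH O h' t' (O t').2 (h' t')) ∧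
            P j (F t h j) (F (n * p) h' j))).card) := by
  
  constructor
  · -- Part 1 : Aval at time 0 is the product of the k values
    intro j
    have h1 : Aval O j 0 = ∏ t' : Fin (n*p),
        (fun x : Fin n × Fin p => if x.1 = j then kval O j x.2 else 1) (O t') := by
      apply Finset.prod_congr rfl
      intro x _
      simp
    rw [h1, Equiv.prod_comp O (fun x : Fin n × Fin p => if x.1 = j then kval O j x.2 else 1),
      Fintype.prod_prod_type]
    calc (∏ j' : Fin n, ∏ i : Fin p, if j' = j then kval O j i else 1)
        = ∏ j' : Fin n, (fun _ : Fin n => if j' = j then ∏ i : Fin p, kval O j i else 1) j' := by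
          apply Finset.prod_congr rfl
          intro j' _
          split <;> simp
      _ = ∏ i : Fin p, kval O j i := by
          rw [Finset.prod_ite_eq' Finset.univ j
            (fun _ : Fin n => ∏ i : Fin p, kval O j i)]
          simp
  · -- Part 2 : downward induction
    refine downInd (n*p) (fun t => ∀ h : Fin (n * p) → Fin n,
      (∀ t' : Fin (n * p), (t' : ℕ) < t → availH O h t' (O t').2 (h t')) →
      ∀ j : Fin n,
        Aval O j t - 1 ≤
          (Finset.univ.filter (fun h' : Fin (n * p) → Fin n =>
            (∀ t' : Fin (n * p), (t' : ℕ) < t → h' t' = h t') ∧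
            (∀ t' : Fin (n * p), t ≤ (t' : ℕ) → availH O h' t' (O t').2 (h' t')) ∧
            P j (F t h j) (F (n * p) h' j))).card) ?_ ?_
    · intro h hval j
      rw [Aval_last]
      simp
    · intro t ht ih h hval j
      have hvt : ((⟨t, ht⟩ : Fin (n*p)) : ℕ) = t := rfl
      obtain ⟨d, hdav, hFeq, hbest⟩ := hF.2 t ht h
      have hagree : ∀ d' : Fin n, ∀ t'' : Fin (n*p), (t'' : ℕ) < t →
          Function.update h ⟨t, ht⟩ d' t'' = h t'' := by
        intro d' t'' ht''
        apply Function.update_of_ne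
        intro hc2; rw [hc2] at ht''; simp at ht''
      have hmem : ∀ d' : Fin n, availH O h t (O ⟨t, ht⟩).2 d' →
          ∀ h' : Fin (n*p) → Fin n,
          (∀ t' : Fin (n*p), (t' : ℕ) < t+1 → h' t' = Function.update h ⟨t, ht⟩ d' t') →
          (∀ t' : Fin (n*p), t+1 ≤ (t' : ℕ) → availH O h' t' (O t').2 (h' t')) →
          (∀ t' : Fin (n*p), (t' : ℕ) < t → h' t' = h t') ∧
          (∀ t' : Fin (n*p), t ≤ (t' : ℕ) → availH O h' t' (O t').2 (h' t')) ∧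
          h' ⟨t, ht⟩ = d' := by
        intro d' hd' h' hag hvv
        have hlow : ∀ t' : Fin (n*p), (t' : ℕ) < t → h' t' = h t' := by
          intro t' ht'
          rw [hag t' (by omega), hagree d' t' ht']
        have hr : h' ⟨t, ht⟩ = d' := by
          rw [hag ⟨t, ht⟩ (by omega), Function.update_self]
        refine ⟨hlow, ?_, hr⟩
        intro t' ht'
        rcases Nat.lt_or_ge ((t' : ℕ)) (t+1) with hc | hc
        · have hte : t' = (⟨t, ht⟩ : Fin (n*p)) := Fin.ext (by omega)
          subst hte
          rw [hr]
          exact (availH_congr O (fun t'' ht'' => hlow t'' ht'')).mpr hd'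
        · exact hvv t' hc
      by_cases hj : (O ⟨t, ht⟩).1 = j
      · -- active agent case
        have hsr : O.symm ((O ⟨t, ht⟩).1, (O ⟨t, ht⟩).2) = ⟨t, ht⟩ := by
          rw [Prod.mk.eta, Equiv.symm_apply_apply]
        have hstrict : ∀ d' : Fin n, availH O h t (O ⟨t, ht⟩).2 d' → d' ≠ d →
            P j (F t h j) (F (t+1) (Function.update h ⟨t, ht⟩ d') j) := by
          intro d' hd' hne
          rcases hbest d' hd' hne with hEq | hPP
          · exfalso
            have c1 : F (t+1) (Function.update h ⟨t, ht⟩ d)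
                (O ⟨t, ht⟩).1 (O ⟨t, ht⟩).2 = d := by
              rw [histF O P F hF (t+1) (by omega) _ _ _
                (by rw [hsr]; exact Nat.lt_succ_self t), hsr, Function.update_self]
            have c2 : F (t+1) (Function.update h ⟨t, ht⟩ d')
                (O ⟨t, ht⟩).1 (O ⟨t, ht⟩).2 = d' := by
              rw [histF O P F hF (t+1) (by omega) _ _ _
                (by rw [hsr]; exact Nat.lt_succ_self t), hsr, Function.update_self]
            rw [hEq, c2] at c1
            exact hne c1
          · rw [hFeq]
            rw [hj] at hPP
            exact hPP
        set D : Finset (Fin n) :=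
          Finset.univ.filter (fun d' : Fin n => availH O h t (O ⟨t, ht⟩).2 d') with hDdef
        have hD : D.card = kval O j (O ⟨t, ht⟩).2 := by
          rw [hDdef, kcount O h t ht hval, hj]
        have hdD : d ∈ D := by
          rw [hDdef]
          exact Finset.mem_filter.mpr ⟨Finset.mem_univ _, hdav⟩
        set St := Finset.univ.filter (fun h' : Fin (n * p) → Fin n =>
            (∀ t' : Fin (n * p), (t' : ℕ) < t → h' t' = h t') ∧
            (∀ t' : Fin (n * p), t ≤ (t' : ℕ) → availH O h' t' (O t').2 (h' t')) ∧
            P j (F t h j) (F (n * p) h' j)) with hSt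
        clear_value D St
        have hWd : Aval O j (t+1) - 1 ≤ (St.filter (fun h' => h' ⟨t, ht⟩ = d)).card := by
          refine le_trans (ih (Function.update h ⟨t, ht⟩ d) (upd_valid O ht hval hdav) j)
            (Finset.card_le_card ?_)
          intro h' hh'
          rw [Finset.mem_filter] at hh'
          obtain ⟨_, hag, hvv, hpp⟩ := hh'
          obtain ⟨c1, c2, c3⟩ := hmem d hdav h' hag hvv
          rw [Finset.mem_filter, hSt, Finset.mem_filter]
          refine ⟨⟨Finset.mem_univ _, c1, c2, ?_⟩, c3⟩
          rw [hFeq]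
          exact hpp
        have hWd' : ∀ d' : Fin n, availH O h t (O ⟨t, ht⟩).2 d' → d' ≠ d →
            Aval O j (t+1) ≤ (St.filter (fun h' => h' ⟨t, ht⟩ = d')).card := by
          intro d' hd' hne
          haveI := hP j
          obtain ⟨hs, hsag, hsval, hsF⟩ := leafF O P F hF (t+1) ht
            (Function.update h ⟨t, ht⟩ d') (upd_valid O ht hval hd')
          have hSsub : Finset.univ.filter (fun h' : Fin (n*p) → Fin n =>
                (∀ t' : Fin (n*p), (t' : ℕ) < t+1 → h' t' = Function.update h ⟨t, ht⟩ d' t') ∧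
                (∀ t' : Fin (n*p), t+1 ≤ (t' : ℕ) → availH O h' t' (O t').2 (h' t')) ∧
                P j (F (t+1) (Function.update h ⟨t, ht⟩ d') j) (F (n*p) h' j))
              ⊆ St.filter (fun h' => h' ⟨t, ht⟩ = d') := by
            intro h' hh'
            rw [Finset.mem_filter] at hh'
            obtain ⟨_, hag, hvv, hpp⟩ := hh'
            obtain ⟨c1, c2, c3⟩ := hmem d' hd' h' hag hvv
            rw [Finset.mem_filter, hSt, Finset.mem_filter]
            refine ⟨⟨Finset.mem_univ _, c1, c2, ?_⟩, c3⟩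
            exact IsTrans.trans _ _ _ (hstrict d' hd' hne) hpp
          have hsmem : hs ∈ St.filter (fun h' => h' ⟨t, ht⟩ = d') := by
            obtain ⟨c1, c2, c3⟩ := hmem d' hd' hs hsag hsval
            rw [Finset.mem_filter, hSt, Finset.mem_filter]
            refine ⟨⟨Finset.mem_univ _, c1, c2, ?_⟩, c3⟩
            rw [show F (n*p) hs j = F (t+1) (Function.update h ⟨t, ht⟩ d') j from congrFun hsF j]
            exact hstrict d' hd' hne
          have hsnot : hs ∉ Finset.univ.filter (fun h' : Fin (n*p) → Fin n =>
                (∀ t' : Fin (n*p), (t' : ℕ) < t+1 → h' t' = Function.update h ⟨t, ht⟩ d' t') ∧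
                (∀ t' : Fin (n*p), t+1 ≤ (t' : ℕ) → availH O h' t' (O t').2 (h' t')) ∧
                P j (F (t+1) (Function.update h ⟨t, ht⟩ d') j) (F (n*p) h' j)) := by
            rw [Finset.mem_filter]
            rintro ⟨_, _, _, hpp⟩
            rw [show F (n*p) hs j = F (t+1) (Function.update h ⟨t, ht⟩ d') j
              from congrFun hsF j] at hpp
            exact irrefl _ hpp
          have h1 := ih (Function.update h ⟨t, ht⟩ d') (upd_valid O ht hval hd') j
          have h2 : insert hs (Finset.univ.filter (fun h' : Fin (n*p) → Fin n =>
                (∀ t' : Fin (n*p), (t' : ℕ) < t+1 → h' t' = Function.update h ⟨t, ht⟩ d' t') ∧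
                (∀ t' : Fin (n*p), t+1 ≤ (t' : ℕ) → availH O h' t' (O t').2 (h' t')) ∧
                P j (F (t+1) (Function.update h ⟨t, ht⟩ d') j) (F (n*p) h' j)))
              ⊆ St.filter (fun h' => h' ⟨t, ht⟩ = d') :=
            Finset.insert_subset hsmem hSsub
          have h3 := Finset.card_le_card h2
          rw [Finset.card_insert_of_notMem hsnot] at h3
          have h4 := Aval_pos O j (t+1)
          exact arith1 _ _ _ h4 h1 h3
        have hdisj : ∀ x ∈ D, ∀ y ∈ D, x ≠ y →
            Disjoint (St.filter (fun h' => h' ⟨t, ht⟩ = x))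
              (St.filter (fun h' => h' ⟨t, ht⟩ = y)) := by
          intro x _ y _ hxy
          rw [Finset.disjoint_left]
          intro a ha hb
          rw [Finset.mem_filter] at ha hb
          exact hxy (ha.2.symm.trans hb.2)
        have hbu : (D.biUnion (fun d' => St.filter (fun h' => h' ⟨t, ht⟩ = d'))).card
            = ∑ d' ∈ D, (St.filter (fun h' => h' ⟨t, ht⟩ = d')).card :=
          Finset.card_biUnion hdisj
        have hsum : ∑ d' ∈ D, (St.filter (fun h' => h' ⟨t, ht⟩ = d')).card ≤ St.card := by
          rw [← hbu]
          exact Finset.card_le_card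
            (Finset.biUnion_subset.mpr (fun d' _ => Finset.filter_subset _ _))
        have hsum2 : (Aval O j (t+1) - 1) + (D.card - 1) * Aval O j (t+1)
            ≤ ∑ d' ∈ D, (St.filter (fun h' => h' ⟨t, ht⟩ = d')).card := by
          rw [← Finset.add_sum_erase D _ hdD]
          apply Nat.add_le_add hWd
          calc (D.card - 1) * Aval O j (t+1)
              = ∑ _x ∈ D.erase d, Aval O j (t+1) := by
                rw [Finset.sum_const, Finset.card_erase_of_mem hdD, smul_eq_mul]
            _ ≤ ∑ x ∈ D.erase d, (St.filter (fun h' => h' ⟨t, ht⟩ = x)).card := by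
                apply Finset.sum_le_sum
                intro x hx
                have hxD := Finset.mem_of_mem_erase hx
                rw [hDdef, Finset.mem_filter] at hxD
                exact hWd' x hxD.2 (Finset.ne_of_mem_erase hx)
        have hAval : Aval O j t = kval O j (O ⟨t, ht⟩).2 * Aval O j (t+1) := by
          rw [Aval_step O j t ht, if_pos hj]
        have hApos := Aval_pos O j (t+1)
        have hmul : Aval O j (t+1) ≤ kval O j (O ⟨t, ht⟩).2 * Aval O j (t+1) :=
          Nat.le_mul_of_pos_left _ (kval_pos O j _)
        have hsub' : (kval O j (O ⟨t, ht⟩).2 - 1) * Aval O j (t+1)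
            = kval O j (O ⟨t, ht⟩).2 * Aval O j (t+1) - Aval O j (t+1) := by
          rw [Nat.sub_mul, one_mul]
        rw [hAval]
        rw [hD] at hsum2
        rw [hsub'] at hsum2
        exact arith2 _ _ _ _ hApos hmul hsum2 hsum
      · -- passive agent case
        have hA : Aval O j t = Aval O j (t+1) := by
          rw [Aval_step O j t ht, if_neg hj, one_mul]
        have hsub : Finset.univ.filter (fun h' : Fin (n*p) → Fin n =>
              (∀ t' : Fin (n*p), (t' : ℕ) < t+1 → h' t' = Function.update h ⟨t, ht⟩ d t') ∧
              (∀ t' : Fin (n*p), t+1 ≤ (t' : ℕ) → availH O h' t' (O t').2 (h' t')) ∧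
              P j (F (t+1) (Function.update h ⟨t, ht⟩ d) j) (F (n*p) h' j))
            ⊆ Finset.univ.filter (fun h' : Fin (n * p) → Fin n =>
              (∀ t' : Fin (n * p), (t' : ℕ) < t → h' t' = h t') ∧
              (∀ t' : Fin (n * p), t ≤ (t' : ℕ) → availH O h' t' (O t').2 (h' t')) ∧
              P j (F t h j) (F (n * p) h' j)) := by
          intro h' hh'
          rw [Finset.mem_filter] at hh' ⊢
          obtain ⟨_, hag, hvv, hpp⟩ := hh'
          obtain ⟨c1, c2, _⟩ := hmem d hdav h' hag hvv
          refine ⟨Finset.mem_univ _, c1, c2, ?_⟩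
          rw [hFeq]
          exact hpp
        calc Aval O j t - 1 = Aval O j (t+1) - 1 := by rw [hA]
          _ ≤ _ := ih (Function.update h ⟨t, ht⟩ d) (upd_valid O ht hval hdav) j
          _ ≤ _ := Finset.card_le_card hsub
end
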